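/- arXiv:1004.4416 — 7 statements merged into one kernel-verified Lean document; each statement's English description precedes it below -/
import Mathlib

section
/- Under hypothesis (H), the random walk is transient: for all x, y ∈ S the series G(x,y) = ∑_{n=0}^∞ p_n(x,y) converges (is finite). -/
open scoped Classical

noncomputable section

/-- The `n`-step transition probabilities of the nearest-neighbour walk with
one-step transition probabilities `p`. -/
def pn {S : Type*} (p : S → S → ℝ) : ℕ → S → S → ℝ
  | 0, x, y => if x = y then 1 else 0
  | n + 1, x, y => ∑' z, p x z * pn p n z y

/-- In a tree, every path realizes the distance between its endpoints. -/
lemma path_length_eq_dist {S : Type*} (G : SimpleGraph S)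
    (hconn : G.Connected) (hacyc : G.IsAcyclic) {u v : S}
    (P : G.Walk u v) (hP : P.IsPath) : P.length = G.dist u v := by
  obtain ⟨W, hW⟩ := (hconn u v).exists_walk_length_eq_dist
  have hQ : W.bypass.IsPath := W.bypass_isPath
  have hQle : W.bypass.length ≤ G.dist u v := hW ▸ W.length_bypass_le
  have hQge : G.dist u v ≤ W.bypass.length := SimpleGraph.dist_le _
  have hPQ : (⟨P, hP⟩ : G.Path u v) = ⟨W.bypass, hQ⟩ := hacyc.path_unique _ _
  have : P = W.bypass := congrArg Subtype.val hPQ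
  rw [this]; omega

/-- Existence of a path realizing the distance. -/
lemma exists_path_length_eq_dist {S : Type*} (G : SimpleGraph S)
    (hconn : G.Connected) {u v : S} :
    ∃ P : G.Walk u v, P.IsPath ∧ P.length = G.dist u v := by
  obtain ⟨W, hW⟩ := (hconn u v).exists_walk_length_eq_dist
  refine ⟨W.bypass, W.bypass_isPath, le_antisymm (hW ▸ W.length_bypass_le)
    (SimpleGraph.dist_le _)⟩

/-- In a tree, every vertex `w ≠ y` has a unique neighbour closer to `y`;
all other neighbours are farther. -/
lemma tree_dist_step {S : Type*} (G : SimpleGraph S)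
    (hconn : G.Connected) (hacyc : G.IsAcyclic) {w y : S} (hwy : w ≠ y) :
    ∃ c, G.Adj w c ∧ G.dist c y + 1 = G.dist w y ∧
      ∀ z, G.Adj w z → z ≠ c → G.dist z y = G.dist w y + 1 := by
  classical
  obtain ⟨P, hP, hlen⟩ := exists_path_length_eq_dist G hconn (u := w) (v := y)
  have hd : 0 < G.dist w y := hconn.pos_dist_of_ne hwy
  cases P with
  | nil => simp at hd
  | cons hadj Q =>
    rename_i c
    have hQ : Q.IsPath := hP.of_cons
    have hwQ : w ∉ Q.support := ((SimpleGraph.Walk.cons_isPath_iff _ _).mp hP).2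
    have hQlen : Q.length = G.dist c y := path_length_eq_dist G hconn hacyc Q hQ
    have hc1 : G.dist c y + 1 = G.dist w y := by
      simp only [SimpleGraph.Walk.length_cons] at hlen; omega
    refine ⟨c, hadj, hc1, ?_⟩
    intro z hz hzc
    obtain ⟨Pz, hPz, hPzlen⟩ := exists_path_length_eq_dist G hconn (u := z) (v := y)
    by_cases hwmem : w ∈ Pz.support
    · -- the path from z must go through w, so dist z y = dist z w + dist w y
      have hsplit := Pz.take_spec hwmem
      have hlen2 : (Pz.takeUntil w hwmem).length + (Pz.dropUntil w hwmem).length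
          = Pz.length := by
        rw [← SimpleGraph.Walk.length_append, hsplit]
      have hdrop : (Pz.dropUntil w hwmem).length = G.dist w y :=
        path_length_eq_dist G hconn hacyc _ (hPz.dropUntil hwmem)
      have htake : (Pz.takeUntil w hwmem).length ≠ 0 := by
        intro h0
        exact hz.ne' (SimpleGraph.Walk.eq_of_length_eq_zero h0)
      have hle : G.dist z y ≤ G.dist w y + 1 := by
        have h1 : G.dist z w = 1 := SimpleGraph.dist_eq_one_iff_adj.mpr hz.symm
        have := hconn.dist_triangle (u := z) (v := w) (w := y)
        omega
      omega
    · -- otherwise cons gives a path from w to y through z; uniqueness forces z = c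
      have hcons : (SimpleGraph.Walk.cons hz Pz).IsPath :=
        (SimpleGraph.Walk.cons_isPath_iff _ _).mpr ⟨hPz, hwmem⟩
      have hconslen : (SimpleGraph.Walk.cons hz Pz).length = G.dist w y :=
        path_length_eq_dist G hconn hacyc _ hcons
      have heq : (⟨SimpleGraph.Walk.cons hz Pz, hcons⟩ : G.Path w y)
          = ⟨SimpleGraph.Walk.cons hadj Q, hP⟩ := hacyc.path_unique _ _
      have heq' : (SimpleGraph.Walk.cons hz Pz) = SimpleGraph.Walk.cons hadj Q :=
        congrArg Subtype.val heq
      have : z = c := by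
        have := congrArg (fun W => SimpleGraph.Walk.getVert W 1) heq'
        simpa [SimpleGraph.Walk.getVert_cons_succ] using this
      exact absurd this hzc

/-- Under hypothesis (H) the walk is transient: the Green
series `G(x,y) = ∑_n p_n(x,y)` converges for all `x, y`. -/
theorem transient_of_H
    {S : Type*} [Countable S] (G : SimpleGraph S)
    [∀ x : S, Fintype (G.neighborSet x)]
    (hconn : G.Connected) (hacyc : G.IsAcyclic)
    (p : S → S → ℝ)
    (hp_pos : ∀ x y, 0 < p x y ↔ G.Adj x y)
    (hp_zero : ∀ x y, ¬ G.Adj x y → p x y = 0)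
    (hp_sum : ∀ x, ∑ y ∈ G.neighborFinset x, p x y = 1)
    (ε η : ℝ) (hε : 0 < ε) (hη : 0 < η)
    (hH : ∀ x y, G.Adj x y → ε ≤ p x y ∧ p x y ≤ 1 / 2 - η) :
    ∀ x y : S, Summable (fun n => pn p n x y) := by
  intro x y
  -- nonnegativity of p
  have hp0 : ∀ a b, 0 ≤ p a b := by
    intro a b
    by_cases h : G.Adj a b
    · exact le_of_lt ((hp_pos a b).mpr h)
    · exact le_of_eq (hp_zero a b h).symm
  -- there is some edge, hence η < 1/2
  have hedge : ∃ z, G.Adj x z := by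
    by_contra h
    push_neg at h
    have hne : (G.neighborFinset x) = ∅ := by
      ext z; simp [SimpleGraph.mem_neighborFinset, h z]
    have h1 := hp_sum x
    rw [hne, Finset.sum_empty] at h1
    norm_num at h1
  obtain ⟨z0, hz0⟩ := hedge
  have ha_pos : 0 < 1 / 2 - η := lt_of_lt_of_le ((hp_pos x z0).mpr hz0) (hH x z0 hz0).2
  have hη2 : η < 1 / 2 := by linarith
  set a : ℝ := 1 / 2 - η with ha_def
  set L : ℝ := 1 - η with hL_def
  have hL0 : 0 < L := by simp [hL_def]; linarith
  have hL1 : L < 1 := by simp [hL_def]; linarith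
  set θ : ℝ := a / L + (1 - a) * L with hθ_def
  have hθ1 : θ < 1 := by
    simp only [hθ_def, ha_def, hL_def]
    rw [div_add' _ _ _ (by linarith : (1:ℝ) - η ≠ 0), div_lt_one (by linarith : (0:ℝ) < 1 - η)]
    nlinarith [mul_pos (mul_pos hη hη) (show (0:ℝ) < 3/2 - η by linarith)]
  have hθ0 : 0 < θ := by
    have h1 : 0 < a / L := div_pos ha_pos hL0
    have h2 : 0 < (1 - a) * L := mul_pos (by simp only [ha_def]; linarith) hL0
    simp only [hθ_def]; linarith
  have hLθ : L ≤ θ := by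
    have h3 : a * L ≤ a := mul_le_of_le_one_right ha_pos.le hL1.le
    have h2 : a ≤ a / L := by rw [le_div_iff₀ hL0]; exact h3
    simp only [hθ_def]
    nlinarith [h2, h3]
  -- key one-step estimate
  have key : ∀ w : S, ∑ z ∈ G.neighborFinset w, p w z * L ^ (G.dist z y)
      ≤ θ * L ^ (G.dist w y) := by
    intro w
    by_cases hwy : w = y
    · subst hwy
      have hsum : ∑ z ∈ G.neighborFinset w, p w z * L ^ (G.dist z w)
          = ∑ z ∈ G.neighborFinset w, p w z * L := by
        refine Finset.sum_congr rfl fun z hz => ?_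
        rw [SimpleGraph.mem_neighborFinset] at hz
        rw [SimpleGraph.dist_eq_one_iff_adj.mpr hz.symm, pow_one]
      rw [hsum, ← Finset.sum_mul, hp_sum w, one_mul, SimpleGraph.dist_self, pow_zero, mul_one]
      exact hLθ
    · obtain ⟨c, hc_adj, hc_dist, h_other⟩ := tree_dist_step G hconn hacyc hwy
      have hc_mem : c ∈ G.neighborFinset w := (SimpleGraph.mem_neighborFinset _ _ _).mpr hc_adj
      set m : ℕ := G.dist c y with hm
      have hdw : G.dist w y = m + 1 := by omega
      rw [← Finset.add_sum_erase _ _ hc_mem]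
      have herase : ∀ z ∈ (G.neighborFinset w).erase c,
          p w z * L ^ (G.dist z y) = p w z * L ^ (m + 2) := by
        intro z hz
        obtain ⟨hzc, hzmem⟩ := Finset.mem_erase.mp hz
        rw [SimpleGraph.mem_neighborFinset] at hzmem
        rw [h_other z hzmem hzc, hdw]
      rw [Finset.sum_congr rfl herase, ← Finset.sum_mul]
      have hsum_erase : ∑ z ∈ (G.neighborFinset w).erase c, p w z = 1 - p w c := by
        have := Finset.add_sum_erase _ (p w) hc_mem
        rw [hp_sum w] at this
        linarith
      rw [hsum_erase, hdw]
      have hpc_le : p w c ≤ a := (hH w c hc_adj).2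
      have hpc0 : 0 ≤ p w c := hp0 w c
      have hθL : θ * L ^ (m + 1) = a * L ^ m + (1 - a) * L ^ (m + 2) := by
        rw [hθ_def]
        field_simp
        ring
      rw [hθL, ← hm, pow_add]
      have hLm : (0:ℝ) < L ^ m := pow_pos hL0 m
      have hL2 : L ^ 2 ≤ 1 := pow_le_one₀ hL0.le hL1.le
      nlinarith [mul_nonneg (mul_nonneg (sub_nonneg.mpr hpc_le) hLm.le)
        (sub_nonneg.mpr hL2)]
  -- nonnegativity of pn
  have hpn0 : ∀ n w z, 0 ≤ pn p n w z := by
    intro n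
    induction n with
    | zero => intro w z; simp [pn]; positivity
    | succ n ih =>
      intro w z
      simp only [pn]
      exact tsum_nonneg fun u => mul_nonneg (hp0 w u) (ih u z)
  -- main exponential bound
  have hbound : ∀ n w, pn p n w y ≤ θ ^ n * L ^ (G.dist w y) := by
    intro n
    induction n with
    | zero =>
      intro w
      by_cases h : w = y
      · subst h; simp [pn, SimpleGraph.dist_self]
      · simp [pn, h]; positivity
    | succ n ih =>
      intro w
      show (∑' z, p w z * pn p n z y) ≤ _
      rw [tsum_eq_sum (s := G.neighborFinset w) (fun b hb => by
        rw [hp_zero w b (by simpa [SimpleGraph.mem_neighborFinset] using hb), zero_mul])]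
      calc ∑ z ∈ G.neighborFinset w, p w z * pn p n z y
          ≤ ∑ z ∈ G.neighborFinset w, p w z * (θ ^ n * L ^ (G.dist z y)) := by
            refine Finset.sum_le_sum fun z _ => ?_
            exact mul_le_mul_of_nonneg_left (ih z) (hp0 w z)
        _ = θ ^ n * ∑ z ∈ G.neighborFinset w, p w z * L ^ (G.dist z y) := by
            rw [Finset.mul_sum]; exact Finset.sum_congr rfl fun z _ => by ring
        _ ≤ θ ^ n * (θ * L ^ (G.dist w y)) := by
            exact mul_le_mul_of_nonneg_left (key w) (pow_nonneg (le_of_lt hθ0) n)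
        _ = θ ^ (n + 1) * L ^ (G.dist w y) := by ring
  exact Summable.of_nonneg_of_le (fun n => hpn0 n x y) (fun n => hbound n x)
    ((summable_geometric_of_lt_one (le_of_lt hθ0) hθ1).mul_right _)

end
end

section
/- Under hypothesis (H), the Green function is uniformly bounded: there exists a constant C < ∞, depending only on ε and η, such that G(x,y) ≤ C for all x, y ∈ S. -/
open scoped Classical

noncomputable section

/-- The Green function `G(x,y) = ∑_n p_n(x,y)`. -/
def green {S : Type*} (p : S → S → ℝ) (x y : S) : ℝ := ∑' n, pn p n x y

/-- In a tree, every path between two vertices realizes the distance. -/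
lemma tree_path_length {S : Type*} {G : SimpleGraph S} (hconn : G.Connected)
    (hacyc : G.IsAcyclic) {x y : S} (w : G.Walk x y) (hw : w.IsPath) :
    w.length = G.dist x y := by
  obtain ⟨q, hq, hql⟩ := hconn.exists_path_of_dist x y
  have h := hacyc.path_unique ⟨w, hw⟩ ⟨q, hq⟩
  rw [show w = q from congrArg Subtype.val h, hql]

/-- In a tree, crossing an edge changes the distance to any vertex by exactly one. -/
lemma tree_dist_adj {S : Type*} {G : SimpleGraph S} (hconn : G.Connected)
    (hacyc : G.IsAcyclic) {x z : S} (y : S) (hadj : G.Adj x z) :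
    G.dist z y = G.dist x y + 1 ∨ G.dist z y + 1 = G.dist x y := by
  obtain ⟨P, hP, hPl⟩ := hconn.exists_path_of_dist z y
  by_cases hx : x ∈ P.support
  · left
    have ht : (P.takeUntil x hx).length = G.dist z x :=
      tree_path_length hconn hacyc _ (hP.takeUntil hx)
    have hdr : (P.dropUntil x hx).length = G.dist x y :=
      tree_path_length hconn hacyc _ (hP.dropUntil hx)
    have hsplit := congrArg SimpleGraph.Walk.length (P.take_spec hx)
    rw [SimpleGraph.Walk.length_append] at hsplit
    have hzx : G.dist z x = 1 := SimpleGraph.dist_eq_one_iff_adj.mpr hadj.symm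
    omega
  · right
    have hQ : (SimpleGraph.Walk.cons hadj P).IsPath := hP.cons hx
    have := tree_path_length hconn hacyc _ hQ
    rw [SimpleGraph.Walk.length_cons, hPl] at this
    omega

/-- In a tree, there is at most one neighbour of `x` strictly closer to `y`. -/
lemma tree_down_unique {S : Type*} {G : SimpleGraph S} (hconn : G.Connected)
    (hacyc : G.IsAcyclic) {x z₁ z₂ : S} (y : S) (h₁ : G.Adj x z₁) (h₂ : G.Adj x z₂)
    (hd₁ : G.dist z₁ y + 1 = G.dist x y) (hd₂ : G.dist z₂ y + 1 = G.dist x y) :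
    z₁ = z₂ := by
  obtain ⟨P₁, hP₁, hPl₁⟩ := hconn.exists_path_of_dist z₁ y
  obtain ⟨P₂, hP₂, hPl₂⟩ := hconn.exists_path_of_dist z₂ y
  have hx₁ : x ∉ P₁.support := by
    intro hx
    have ht : (P₁.takeUntil x hx).length = G.dist z₁ x :=
      tree_path_length hconn hacyc _ (hP₁.takeUntil hx)
    have hdr : (P₁.dropUntil x hx).length = G.dist x y :=
      tree_path_length hconn hacyc _ (hP₁.dropUntil hx)
    have hsplit := congrArg SimpleGraph.Walk.length (P₁.take_spec hx)
    rw [SimpleGraph.Walk.length_append] at hsplit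
    have hzx : G.dist z₁ x = 1 := SimpleGraph.dist_eq_one_iff_adj.mpr h₁.symm
    omega
  have hx₂ : x ∉ P₂.support := by
    intro hx
    have ht : (P₂.takeUntil x hx).length = G.dist z₂ x :=
      tree_path_length hconn hacyc _ (hP₂.takeUntil hx)
    have hdr : (P₂.dropUntil x hx).length = G.dist x y :=
      tree_path_length hconn hacyc _ (hP₂.dropUntil hx)
    have hsplit := congrArg SimpleGraph.Walk.length (P₂.take_spec hx)
    rw [SimpleGraph.Walk.length_append] at hsplit
    have hzx : G.dist z₂ x = 1 := SimpleGraph.dist_eq_one_iff_adj.mpr h₂.symm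
    omega
  have hQ₁ : (SimpleGraph.Walk.cons h₁ P₁).IsPath := hP₁.cons hx₁
  have hQ₂ : (SimpleGraph.Walk.cons h₂ P₂).IsPath := hP₂.cons hx₂
  have heq := hacyc.path_unique ⟨SimpleGraph.Walk.cons h₁ P₁, hQ₁⟩
    ⟨SimpleGraph.Walk.cons h₂ P₂, hQ₂⟩
  have heq' : SimpleGraph.Walk.cons h₁ P₁ = SimpleGraph.Walk.cons h₂ P₂ :=
    congrArg Subtype.val heq
  have := congrArg (fun w => SimpleGraph.Walk.getVert w 1) heq'
  simpa using this

set_option maxHeartbeats 1000000 in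
/-- Under hypothesis (H) the Green function is uniformly
bounded by a constant depending only on `ε` and `η`. -/
theorem green_uniformly_bounded
    {S : Type*} [Countable S] (G : SimpleGraph S)
    [∀ x : S, Fintype (G.neighborSet x)]
    (hconn : G.Connected) (hacyc : G.IsAcyclic)
    (p : S → S → ℝ)
    (hp_pos : ∀ x y, 0 < p x y ↔ G.Adj x y)
    (hp_zero : ∀ x y, ¬ G.Adj x y → p x y = 0)
    (hp_sum : ∀ x, ∑ y ∈ G.neighborFinset x, p x y = 1)
    (ε η : ℝ) (hε : 0 < ε) (hη : 0 < η)
    (hH : ∀ x y, G.Adj x y → ε ≤ p x y ∧ p x y ≤ 1 / 2 - η) :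
    ∃ C : ℝ, ∀ x y : S, green p x y ≤ C := by
  have hp0 : ∀ x z, 0 ≤ p x z := by
    intro x z
    by_cases h : G.Adj x z
    · exact ((hp_pos x z).mpr h).le
    · rw [hp_zero x z h]
  -- there is at least one edge, hence η < 1/2
  obtain ⟨x₀⟩ := hconn.nonempty
  have hedge : ∃ z₀, G.Adj x₀ z₀ := by
    by_contra h
    push_neg at h
    have hempty : G.neighborFinset x₀ = ∅ := by
      ext z; simp [SimpleGraph.mem_neighborFinset, h z]
    have := hp_sum x₀
    rw [hempty, Finset.sum_empty] at this
    norm_num at this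
  obtain ⟨z₀, hz₀⟩ := hedge
  have ha : (0:ℝ) < 1 / 2 - η := lt_of_lt_of_le hε (le_trans (hH x₀ z₀ hz₀).1 (hH x₀ z₀ hz₀).2)
  set a : ℝ := 1 / 2 - η with ha_def
  set b : ℝ := 1 / 2 + η with hb_def
  have hb : (0:ℝ) < b := by simp only [hb_def]; linarith
  have hab : a + b = 1 := by rw [ha_def, hb_def]; ring
  have haltb : a < b := by rw [ha_def, hb_def]; linarith
  set θ : ℝ := Real.sqrt a / Real.sqrt b with hθ_def
  set L : ℝ := 2 * (Real.sqrt a * Real.sqrt b) with hL_def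
  have hsa : 0 < Real.sqrt a := Real.sqrt_pos.mpr ha
  have hsb : 0 < Real.sqrt b := Real.sqrt_pos.mpr hb
  have hsa2 : Real.sqrt a ^ 2 = a := Real.sq_sqrt ha.le
  have hsb2 : Real.sqrt b ^ 2 = b := Real.sq_sqrt hb.le
  have hθ0 : 0 < θ := div_pos hsa hsb
  have hθ1 : θ < 1 := by
    rw [hθ_def, div_lt_one hsb]
    exact Real.sqrt_lt_sqrt ha.le haltb
  have hL0 : 0 < L := by positivity
  have hsalt : Real.sqrt a < Real.sqrt b := Real.sqrt_lt_sqrt ha.le haltb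
  have hL1 : L < 1 := by
    nlinarith [hsa2, hsb2, mul_pos (sub_pos.mpr hsalt) (sub_pos.mpr hsalt)]
  have hθL : θ ≤ L := by
    rw [hθ_def, div_le_iff₀ hsb, hL_def]
    nlinarith [hsa2, hsb2, mul_pos hsa hsb]
  have hLθ : L * θ = 2 * a := by
    rw [hL_def, hθ_def]
    field_simp
    linear_combination hsa2
  have hid : a + b * θ ^ 2 = L * θ := by
    have hθ2 : θ ^ 2 = a / b := by
      rw [hθ_def, div_pow, hsa2, hsb2]
    rw [hθ2, hLθ, mul_div_cancel₀ a hb.ne']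
    ring
  -- the key one-step estimate
  have key : ∀ y x : S, ∑ z ∈ G.neighborFinset x, p x z * θ ^ (G.dist z y)
      ≤ L * θ ^ (G.dist x y) := by
    intro y x
    by_cases hxy : x = y
    · subst hxy
      have hsum : ∑ z ∈ G.neighborFinset x, p x z * θ ^ (G.dist z x) = θ := by
        calc ∑ z ∈ G.neighborFinset x, p x z * θ ^ (G.dist z x)
            = ∑ z ∈ G.neighborFinset x, p x z * θ := by
              apply Finset.sum_congr rfl
              intro z hz
              have hadj : G.Adj x z := by rwa [SimpleGraph.mem_neighborFinset] at hz
              have h1 : G.dist z x = 1 := by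
                rcases tree_dist_adj hconn hacyc x hadj with h | h
                · rw [SimpleGraph.dist_self] at h; omega
                · rw [SimpleGraph.dist_self] at h; omega
              rw [h1, pow_one]
          _ = (∑ z ∈ G.neighborFinset x, p x z) * θ := (Finset.sum_mul ..).symm
          _ = θ := by rw [hp_sum x, one_mul]
      rw [hsum, SimpleGraph.dist_self, pow_zero, mul_one]
      exact hθL
    · have hd : 0 < G.dist x y := hconn.pos_dist_of_ne hxy
      obtain ⟨d', hd'⟩ : ∃ d', G.dist x y = d' + 1 := ⟨G.dist x y - 1, by omega⟩
      have hdichot : ∀ z ∈ G.neighborFinset x,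
          G.dist z y = d' ∨ G.dist z y = d' + 2 := by
        intro z hz
        have hadj : G.Adj x z := by rwa [SimpleGraph.mem_neighborFinset] at hz
        rcases tree_dist_adj hconn hacyc y hadj with h | h
        · right; omega
        · left; omega
      set D : Finset S := (G.neighborFinset x).filter (fun z => G.dist z y = d') with hD_def
      set s : ℝ := ∑ z ∈ D, p x z with hs_def
      have hs0 : 0 ≤ s := Finset.sum_nonneg fun z _ => hp0 x z
      have hcard : D.card ≤ 1 := by
        apply Finset.card_le_one.mpr
        intro z₁ hz₁ z₂ hz₂
        simp only [hD_def, Finset.mem_filter, SimpleGraph.mem_neighborFinset] at hz₁ hz₂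
        exact tree_down_unique hconn hacyc y hz₁.1 hz₂.1 (by omega) (by omega)
      have hsa' : s ≤ a := by
        rcases Finset.eq_empty_or_nonempty D with h | h
        · rw [hs_def, h, Finset.sum_empty]; exact ha.le
        · obtain ⟨z, hzD⟩ := Finset.card_eq_one.mp (le_antisymm hcard h.card_pos)
          rw [hs_def, hzD, Finset.sum_singleton]
          have hz : z ∈ D := by rw [hzD]; exact Finset.mem_singleton_self z
          simp only [hD_def, Finset.mem_filter, SimpleGraph.mem_neighborFinset] at hz
          exact (hH x z hz.1).2
      have hrest : ∑ z ∈ (G.neighborFinset x).filter (fun z => ¬ G.dist z y = d'), p x z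
          = 1 - s := by
        have := Finset.sum_filter_add_sum_filter_not (G.neighborFinset x)
          (fun z => G.dist z y = d') (fun z => p x z)
        rw [hp_sum x] at this
        rw [hs_def, hD_def]
        linarith
      have hsplit := Finset.sum_filter_add_sum_filter_not (G.neighborFinset x)
        (fun z => G.dist z y = d') (fun z => p x z * θ ^ (G.dist z y))
      have h1 : ∑ z ∈ D, p x z * θ ^ (G.dist z y) = s * θ ^ d' := by
        rw [hs_def, Finset.sum_mul]
        apply Finset.sum_congr rfl
        intro z hz
        have : G.dist z y = d' := (Finset.mem_filter.mp hz).2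
        rw [this]
      have h2 : ∑ z ∈ (G.neighborFinset x).filter (fun z => ¬ G.dist z y = d'),
          p x z * θ ^ (G.dist z y) = (1 - s) * θ ^ (d' + 2) := by
        rw [← hrest, Finset.sum_mul]
        apply Finset.sum_congr rfl
        intro z hz
        obtain ⟨hz1, hz2⟩ := Finset.mem_filter.mp hz
        have : G.dist z y = d' + 2 := by
          rcases hdichot z hz1 with h | h
          · exact absurd h hz2
          · exact h
        rw [this]
      have htotal : ∑ z ∈ G.neighborFinset x, p x z * θ ^ (G.dist z y)
          = s * θ ^ d' + (1 - s) * θ ^ (d' + 2) := by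
        rw [← hsplit, h1, h2]
      rw [htotal, hd']
      have hpowle : θ ^ (d' + 2) ≤ θ ^ d' :=
        pow_le_pow_of_le_one hθ0.le hθ1.le (by omega)
      have hstep : s * θ ^ d' + (1 - s) * θ ^ (d' + 2)
          ≤ a * θ ^ d' + b * θ ^ (d' + 2) := by
            have hb1 : b = 1 - a := by linarith
            have hkey2 : a * θ ^ d' + b * θ ^ (d' + 2)
                - (s * θ ^ d' + (1 - s) * θ ^ (d' + 2))
                = (a - s) * (θ ^ d' - θ ^ (d' + 2)) := by rw [hb1]; ring
            nlinarith [mul_nonneg (sub_nonneg.mpr hsa') (sub_nonneg.mpr hpowle), hkey2]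
      refine hstep.trans (le_of_eq ?_)
      calc a * θ ^ d' + b * θ ^ (d' + 2) = (a + b * θ ^ 2) * θ ^ d' := by ring
        _ = L * θ * θ ^ d' := by rw [hid]
        _ = L * θ ^ (d' + 1) := by ring
  -- nonnegativity of pn
  have hpn0 : ∀ n (x y : S), 0 ≤ pn p n x y := by
    intro n
    induction n with
    | zero => intro x y; simp only [pn]; split <;> norm_num
    | succ n ih =>
      intro x y
      simp only [pn]
      exact tsum_nonneg fun z => mul_nonneg (hp0 x z) (ih z y)
  -- the tsum in the definition of pn is a finite sum
  have htsum_eq : ∀ n (x y : S), pn p (n+1) x y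
      = ∑ z ∈ G.neighborFinset x, p x z * pn p n z y := by
    intro n x y
    simp only [pn]
    apply tsum_eq_sum
    intro z hz
    rw [hp_zero x z (by simpa [SimpleGraph.mem_neighborFinset] using hz), zero_mul]
  -- the main estimate by induction
  have hpn : ∀ n (x y : S), pn p n x y ≤ L ^ n * θ ^ (G.dist x y) := by
    intro n
    induction n with
    | zero =>
      intro x y
      simp only [pn, pow_zero, one_mul]
      split
      · rename_i h; subst h; rw [SimpleGraph.dist_self, pow_zero]
      · exact pow_nonneg hθ0.le _
    | succ n ih =>
      intro x y
      rw [htsum_eq]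
      calc ∑ z ∈ G.neighborFinset x, p x z * pn p n z y
          ≤ ∑ z ∈ G.neighborFinset x, p x z * (L ^ n * θ ^ (G.dist z y)) := by
            apply Finset.sum_le_sum
            intro z _
            exact mul_le_mul_of_nonneg_left (ih z y) (hp0 x z)
        _ = L ^ n * ∑ z ∈ G.neighborFinset x, p x z * θ ^ (G.dist z y) := by
            rw [Finset.mul_sum]; apply Finset.sum_congr rfl; intro z _; ring
        _ ≤ L ^ n * (L * θ ^ (G.dist x y)) :=
            mul_le_mul_of_nonneg_left (key y x) (pow_nonneg hL0.le n)
        _ = L ^ (n + 1) * θ ^ (G.dist x y) := by ring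
  -- conclusion
  refine ⟨(1 - L)⁻¹, fun x y => ?_⟩
  have hbound : ∀ n, pn p n x y ≤ L ^ n := by
    intro n
    refine (hpn n x y).trans ?_
    have h1 : θ ^ (G.dist x y) ≤ 1 := pow_le_one₀ hθ0.le hθ1.le
    calc L ^ n * θ ^ (G.dist x y) ≤ L ^ n * 1 :=
          mul_le_mul_of_nonneg_left h1 (pow_nonneg hL0.le n)
      _ = L ^ n := mul_one _
  have hgsum : Summable (fun n => L ^ n) := summable_geometric_of_lt_one hL0.le hL1
  have hsummable : Summable (fun n => pn p n x y) :=
    Summable.of_nonneg_of_le (fun n => hpn0 n x y) hbound hgsum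
  calc green p x y = ∑' n, pn p n x y := rfl
    _ ≤ ∑' n, L ^ n := Summable.tsum_le_tsum hbound hsummable hgsum
    _ = (1 - L)⁻¹ := tsum_geometric_of_lt_one hL0.le hL1

end
end

section
/- Under hypothesis (H), if z lies on the geodesic from x to y, i.e. d(x,z) + d(z,y) = d(x,y), then G(x,y) · G(z,z) = G(x,z) · G(z,y). -/
open scoped Classical

noncomputable section


lemma aux_exists_path_length {V : Type*} (G : SimpleGraph V) (hconn : G.Connected) (u v : V) :
    ∃ q : G.Walk u v, q.IsPath ∧ q.length = G.dist u v := by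
  obtain ⟨w, hw⟩ := hconn.exists_walk_length_eq_dist u v
  exact ⟨w.bypass, w.bypass_isPath,
    le_antisymm (hw ▸ w.length_bypass_le) (SimpleGraph.dist_le w.bypass)⟩

lemma aux_adj_dist_ne {V : Type*} (G : SimpleGraph V) (hconn : G.Connected)
    (hacyc : G.IsAcyclic) {v w u : V} (h : G.Adj v w) : G.dist w u ≠ G.dist v u := by
  intro heq
  by_cases hvu : v = u
  · subst hvu
    rw [SimpleGraph.dist_self] at heq
    exact h.ne' (hconn.dist_eq_zero_iff.mp heq)
  · have hd0 : G.dist v u ≠ 0 := fun h0 => hvu (hconn.dist_eq_zero_iff.mp h0)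
    obtain ⟨Q, hQp, hQl⟩ := aux_exists_path_length G hconn w u
    have hvQ : v ∉ Q.support := by
      intro hv
      have h1 : G.dist w v ≤ (Q.takeUntil v hv).length := SimpleGraph.dist_le _
      have h1' : G.dist w v = 1 := SimpleGraph.dist_eq_one_iff_adj.mpr h.symm
      have h2 : (Q.takeUntil v hv).length + (Q.dropUntil v hv).length = Q.length := by
        rw [← SimpleGraph.Walk.length_append, SimpleGraph.Walk.take_spec]
      have h3 : G.dist v u ≤ (Q.dropUntil v hv).length := SimpleGraph.dist_le _
      omega
    obtain ⟨P, hPp, hPl⟩ := aux_exists_path_length G hconn v u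
    have hpq := hacyc.path_unique ⟨SimpleGraph.Walk.cons h Q, hQp.cons hvQ⟩ ⟨P, hPp⟩
    have hlen := congrArg (fun r : G.Path v u => r.1.length) hpq
    simp only [SimpleGraph.Walk.length_cons] at hlen
    omega

lemma aux_adj_dist_unique {V : Type*} (G : SimpleGraph V) (hconn : G.Connected)
    (hacyc : G.IsAcyclic) {v u w₁ w₂ : V} (h1 : G.Adj v w₁) (h2 : G.Adj v w₂)
    (hd1 : G.dist w₁ u + 1 = G.dist v u) (hd2 : G.dist w₂ u + 1 = G.dist v u) : w₁ = w₂ := by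
  obtain ⟨Q1, hQ1p, hQ1l⟩ := aux_exists_path_length G hconn w₁ u
  obtain ⟨Q2, hQ2p, hQ2l⟩ := aux_exists_path_length G hconn w₂ u
  have hv1 : v ∉ Q1.support := by
    intro hv
    have ha := SimpleGraph.dist_le (Q1.dropUntil v hv)
    have hb := SimpleGraph.Walk.length_dropUntil_le Q1 hv
    omega
  have hv2 : v ∉ Q2.support := by
    intro hv
    have ha := SimpleGraph.dist_le (Q2.dropUntil v hv)
    have hb := SimpleGraph.Walk.length_dropUntil_le Q2 hv
    omega
  have hpq := hacyc.path_unique ⟨SimpleGraph.Walk.cons h1 Q1, hQ1p.cons hv1⟩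
    ⟨SimpleGraph.Walk.cons h2 Q2, hQ2p.cons hv2⟩
  have := congrArg (fun r : G.Path v u => r.1.getVert 1) hpq
  simpa [SimpleGraph.Walk.getVert_cons_succ, SimpleGraph.Walk.getVert_zero] using this

lemma aux_step {V : Type*} (G : SimpleGraph V) (hconn : G.Connected) (hacyc : G.IsAcyclic)
    {v u : V} (hne : v ≠ u) :
    ∃ t, G.Adj v t ∧ G.dist t u + 1 = G.dist v u ∧
      ∀ w, G.Adj v w → w ≠ t → G.dist w u = G.dist v u + 1 := by
  obtain ⟨W, hW⟩ := hconn.exists_walk_length_eq_dist v u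
  cases W with
  | nil => exact absurd rfl hne
  | @cons _ t _ h q =>
    rw [SimpleGraph.Walk.length_cons] at hW
    have htu : G.dist t u ≤ q.length := SimpleGraph.dist_le q
    have htri : G.dist v u ≤ G.dist v t + G.dist t u := hconn.dist_triangle
    have hvt : G.dist v t = 1 := SimpleGraph.dist_eq_one_iff_adj.mpr h
    have htd : G.dist t u + 1 = G.dist v u := by omega
    refine ⟨t, h, htd, fun w hw hwt => ?_⟩
    have hne' : G.dist w u ≠ G.dist v u := aux_adj_dist_ne G hconn hacyc hw
    have t1 : G.dist w u ≤ G.dist w v + G.dist v u := hconn.dist_triangle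
    have t2 : G.dist v u ≤ G.dist v w + G.dist w u := hconn.dist_triangle
    have hvw : G.dist v w = 1 := SimpleGraph.dist_eq_one_iff_adj.mpr hw
    have hwv : G.dist w v = 1 := by rw [SimpleGraph.dist_comm]; exact hvw
    have hne'' : G.dist w u + 1 ≠ G.dist v u := fun hth =>
      hwt (aux_adj_dist_unique G hconn hacyc hw h hth htd)
    omega

lemma aux_geo_adj {V : Type*} (G : SimpleGraph V) (hconn : G.Connected) (hacyc : G.IsAcyclic)
    {x y z w : V} (hxz : x ≠ z)
    (hgeo : G.dist x z + G.dist z y = G.dist x y) (hadj : G.Adj x w) :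
    G.dist w z + G.dist z y = G.dist w y := by
  by_cases hwz : w = z
  · subst hwz; rw [SimpleGraph.dist_self, Nat.zero_add]
  · obtain ⟨t, ht, htd, hto⟩ := aux_step G hconn hacyc hxz
    have hxz0 : G.dist x z ≠ 0 := fun h0 => hxz (hconn.dist_eq_zero_iff.mp h0)
    have hxy : x ≠ y := by
      intro h; subst h
      rw [SimpleGraph.dist_self] at hgeo
      have : G.dist x z = 0 := by
        have := hconn.dist_triangle (u := x) (v := z) (w := x)
        rw [SimpleGraph.dist_self] at this
        rw [SimpleGraph.dist_comm] at hgeo ⊢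
        omega
      exact hxz0 this
    have t1 : G.dist t y ≤ G.dist t z + G.dist z y := hconn.dist_triangle
    have t2 : G.dist x y ≤ G.dist x t + G.dist t y := hconn.dist_triangle
    have hxt : G.dist x t = 1 := SimpleGraph.dist_eq_one_iff_adj.mpr ht
    have hty : G.dist t y + 1 = G.dist x y := by omega
    obtain ⟨t', ht', htd', hto'⟩ := aux_step G hconn hacyc hxy
    have htt : t' = t := aux_adj_dist_unique G hconn hacyc ht' ht htd' hty
    subst htt
    by_cases hwt : w = t'
    · subst hwt; omega
    · have h1 : G.dist w z = G.dist x z + 1 := hto w hadj hwt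
      have h2 : G.dist w y = G.dist x y + 1 := hto' w hadj hwt
      omega




def fpass {S : Type*} (p : S → S → ℝ) (z : S) : ℕ → S → ℝ
  | 0, x => if x = z then 1 else 0
  | n + 1, x => if x = z then 0 else ∑' w, p x w * fpass p z n w

lemma pn_zero {S : Type*} (p : S → S → ℝ) (x y : S) :
    pn p 0 x y = if x = y then 1 else 0 := rfl

lemma pn_succ {S : Type*} (p : S → S → ℝ) (n : ℕ) (x y : S) :
    pn p (n + 1) x y = ∑' w, p x w * pn p n w y := rfl

lemma fpass_zero {S : Type*} (p : S → S → ℝ) (z x : S) :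
    fpass p z 0 x = if x = z then 1 else 0 := rfl

lemma fpass_succ {S : Type*} (p : S → S → ℝ) (z : S) (n : ℕ) (x : S) :
    fpass p z (n + 1) x = if x = z then 0 else ∑' w, p x w * fpass p z n w := rfl

lemma aux_p_nonneg {S : Type*} (G : SimpleGraph S) (p : S → S → ℝ)
    (hp_pos : ∀ x y, 0 < p x y ↔ G.Adj x y) (hp_zero : ∀ x y, ¬ G.Adj x y → p x y = 0)
    (x y : S) : 0 ≤ p x y := by
  by_cases h : G.Adj x y
  · exact ((hp_pos x y).mpr h).le
  · rw [hp_zero x y h]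

lemma aux_tsum_nbr {S : Type*} (G : SimpleGraph S) [∀ x : S, Fintype (G.neighborSet x)]
    (p : S → S → ℝ) (hp_zero : ∀ x y, ¬ G.Adj x y → p x y = 0) (x : S) (g : S → ℝ) :
    ∑' w, p x w * g w = ∑ w ∈ G.neighborFinset x, p x w * g w :=
  tsum_eq_sum fun w hw => by
    rw [hp_zero x w (fun ha => hw ((SimpleGraph.mem_neighborFinset _ _ _).mpr ha)), zero_mul]

lemma aux_pn_nonneg {S : Type*} (G : SimpleGraph S) (p : S → S → ℝ)
    (hp_pos : ∀ x y, 0 < p x y ↔ G.Adj x y) (hp_zero : ∀ x y, ¬ G.Adj x y → p x y = 0)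
    (n : ℕ) : ∀ x y : S, 0 ≤ pn p n x y := by
  induction n with
  | zero => intro x y; rw [pn_zero]; split <;> norm_num
  | succ n ih =>
    intro x y
    rw [pn_succ]
    exact tsum_nonneg fun w => mul_nonneg (aux_p_nonneg G p hp_pos hp_zero x w) (ih w y)

lemma aux_fpass_nonneg {S : Type*} (G : SimpleGraph S) (p : S → S → ℝ)
    (hp_pos : ∀ x y, 0 < p x y ↔ G.Adj x y) (hp_zero : ∀ x y, ¬ G.Adj x y → p x y = 0)
    (z : S) (n : ℕ) : ∀ x : S, 0 ≤ fpass p z n x := by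
  induction n with
  | zero => intro x; rw [fpass_zero]; split <;> norm_num
  | succ n ih =>
    intro x
    rw [fpass_succ]
    split
    · exact le_refl 0
    · exact tsum_nonneg fun w => mul_nonneg (aux_p_nonneg G p hp_pos hp_zero x w) (ih w)

lemma aux_fpass_le_pn {S : Type*} (G : SimpleGraph S) [∀ x : S, Fintype (G.neighborSet x)]
    (p : S → S → ℝ)
    (hp_pos : ∀ x y, 0 < p x y ↔ G.Adj x y) (hp_zero : ∀ x y, ¬ G.Adj x y → p x y = 0)
    (z : S) (n : ℕ) : ∀ x : S, fpass p z n x ≤ pn p n x z := by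
  induction n with
  | zero => intro x; rw [fpass_zero, pn_zero]
  | succ n ih =>
    intro x
    rw [fpass_succ, pn_succ]
    split
    · exact aux_pn_nonneg G p hp_pos hp_zero (n+1) x z  -- wrong shape, fix
    · rw [aux_tsum_nbr G p hp_zero, aux_tsum_nbr G p hp_zero]
      exact Finset.sum_le_sum fun w _ =>
        mul_le_mul_of_nonneg_left (ih w) (aux_p_nonneg G p hp_pos hp_zero x w)



set_option maxHeartbeats 1600000 in
/-- Under hypothesis (H), if `z` lies on the geodesic from
`x` to `y` then `G(x,y) ⬝ G(z,z) = G(x,z) ⬝ G(z,y)`. -/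
theorem green_mul_of_mem_geodesic
    {S : Type*} [Countable S] (G : SimpleGraph S)
    [∀ x : S, Fintype (G.neighborSet x)]
    (hconn : G.Connected) (hacyc : G.IsAcyclic)
    (p : S → S → ℝ)
    (hp_pos : ∀ x y, 0 < p x y ↔ G.Adj x y)
    (hp_zero : ∀ x y, ¬ G.Adj x y → p x y = 0)
    (hp_sum : ∀ x, ∑ y ∈ G.neighborFinset x, p x y = 1)
    (ε η : ℝ) (hε : 0 < ε) (hη : 0 < η)
    (hH : ∀ x y, G.Adj x y → ε ≤ p x y ∧ p x y ≤ 1 / 2 - η) :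
    ∀ x y z : S, G.dist x z + G.dist z y = G.dist x y →
      green p x y * green p z z = green p x z * green p z y := by
  intro x y z hgeo
  -- η < 1/2
  have hnbr : (G.neighborFinset x).Nonempty := by
    by_contra h
    rw [Finset.not_nonempty_iff_eq_empty] at h
    have := hp_sum x
    rw [h, Finset.sum_empty] at this
    norm_num at this
  obtain ⟨w₀, hw₀⟩ := hnbr
  have hη2 : η < 1/2 := by
    have h := hH x w₀ ((SimpleGraph.mem_neighborFinset _ _ _).mp hw₀)
    linarith [h.1, h.2]
  obtain ⟨lam, hlam_def⟩ : ∃ l : ℝ, l = 1 - η := ⟨_, rfl⟩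
  obtain ⟨rho, hrho_def⟩ : ∃ r : ℝ, r = (1/2 - η)/(1 - η) + (1/2 + η)*(1 - η) := ⟨_, rfl⟩
  have hden : (1:ℝ) - η ≠ 0 := by linarith
  have hlam0 : 0 < lam := by rw [hlam_def]; linarith
  have hlam1 : lam < 1 := by rw [hlam_def]; linarith
  have hkey : (1/2 - η) + (1/2 + η) * lam^2 = rho * lam := by
    rw [hlam_def, hrho_def]
    field_simp
  have hlam2 : lam^2 < 1 := by nlinarith [hlam0, hlam1]
  have hlr : lam ≤ rho := by
    have h3 : rho * lam - lam^2 = (1/2 - η) * (1 - lam^2) := by rw [← hkey]; ring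
    have h4 : 0 ≤ (1/2 - η) * (1 - lam^2) := mul_nonneg (by linarith) (by linarith)
    have h5 : lam * lam ≤ rho * lam := by nlinarith [h3, h4]
    exact le_of_mul_le_mul_right h5 hlam0
  have hrho1 : rho < 1 := by
    have hmul : rho * (1 - η) = (1/2 - η) + (1/2 + η) * (1 - η)^2 := by
      rw [hrho_def]; field_simp
    have hlt : rho * (1 - η) < 1 * (1 - η) := by
      rw [hmul]
      nlinarith [mul_pos (mul_pos hη hη) (show (0:ℝ) < 3 - 2*η by linarith)]
    exact lt_of_mul_lt_mul_right hlt (by linarith)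
  have hrho0 : 0 < rho := lt_of_lt_of_le hlam0 hlr
  -- drift inequality
  have hdrift : ∀ v u : S,
      ∑ w ∈ G.neighborFinset v, p v w * lam ^ G.dist w u ≤ rho * lam ^ G.dist v u := by
    intro v u
    by_cases hvu : v = u
    · subst hvu
      have hcongr : ∀ w ∈ G.neighborFinset v, p v w * lam ^ G.dist w v = p v w * lam := by
        intro w hw
        rw [SimpleGraph.dist_eq_one_iff_adj.mpr ((SimpleGraph.mem_neighborFinset _ _ _).mp hw).symm,
          pow_one]
      rw [Finset.sum_congr rfl hcongr, ← Finset.sum_mul, hp_sum v, one_mul,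
        SimpleGraph.dist_self, pow_zero, mul_one]
      exact hlr
    · obtain ⟨t, ht, htd, hto⟩ := aux_step G hconn hacyc hvu
      have htm : t ∈ G.neighborFinset v := (SimpleGraph.mem_neighborFinset _ _ _).mpr ht
      rw [← Finset.sum_erase_add _ _ htm]
      have herase : ∀ w ∈ (G.neighborFinset v).erase t,
          p v w * lam ^ G.dist w u = p v w * lam ^ (G.dist v u + 1) := by
        intro w hw
        obtain ⟨hwt, hwm⟩ := Finset.mem_erase.mp hw
        rw [hto w ((SimpleGraph.mem_neighborFinset _ _ _).mp hwm) hwt]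
      rw [Finset.sum_congr rfl herase, ← Finset.sum_mul]
      have hsum_erase : ∑ w ∈ (G.neighborFinset v).erase t, p v w = 1 - p v t := by
        have h := Finset.sum_erase_add (G.neighborFinset v) (p v) htm
        rw [hp_sum v] at h
        linarith
      rw [hsum_erase]
      obtain ⟨d, hd⟩ : ∃ d, G.dist v u = d + 1 := ⟨G.dist t u, htd.symm⟩
      have hdtu : G.dist t u = d := by omega
      rw [hd, hdtu]
      have hpow : (0:ℝ) < lam ^ d := pow_pos hlam0 d
      have hpt := hH v t ht
      have hp0 : 0 ≤ p v t := aux_p_nonneg G p hp_pos hp_zero v t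
      have hstep : (1 - p v t) * lam^2 + p v t ≤ rho * lam := by
        nlinarith [mul_nonneg (by linarith [hpt.2] : (0:ℝ) ≤ 1/2 - η - p v t)
          (by linarith [hlam2] : (0:ℝ) ≤ 1 - lam^2), hkey]
      have hmul := mul_le_mul_of_nonneg_left hstep hpow.le
      have e3 : (1 - p v t) * lam ^ (d + 1 + 1) + p v t * lam ^ d
          = lam ^ d * ((1 - p v t) * lam ^ 2 + p v t) := by ring
      have e4 : rho * lam ^ (d + 1) = lam ^ d * (rho * lam) := by ring
      rw [e3, e4]
      exact hmul
  -- geometric bound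
  have hbound : ∀ (n : ℕ) (u v : S), pn p n v u ≤ rho ^ n * lam ^ G.dist v u := by
    intro n
    induction n with
    | zero =>
      intro u v
      rw [pn_zero]
      split
      · next h => subst h; rw [SimpleGraph.dist_self]; simp
      · positivity
    | succ n ih =>
      intro u v
      rw [pn_succ, aux_tsum_nbr G p hp_zero]
      calc ∑ w ∈ G.neighborFinset v, p v w * pn p n w u
          ≤ ∑ w ∈ G.neighborFinset v, p v w * (rho ^ n * lam ^ G.dist w u) :=
            Finset.sum_le_sum fun w _ => mul_le_mul_of_nonneg_left (ih u w)
              (aux_p_nonneg G p hp_pos hp_zero v w)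
        _ = rho ^ n * ∑ w ∈ G.neighborFinset v, p v w * lam ^ G.dist w u := by
            rw [Finset.mul_sum]; exact Finset.sum_congr rfl fun w _ => by ring
        _ ≤ rho ^ n * (rho * lam ^ G.dist v u) :=
            mul_le_mul_of_nonneg_left (hdrift v u) (pow_nonneg hrho0.le n)
        _ = rho ^ (n+1) * lam ^ G.dist v u := by ring
  have hsumm : ∀ u v : S, Summable (fun n => pn p n v u) := by
    intro u v
    refine Summable.of_nonneg_of_le (fun n => aux_pn_nonneg G p hp_pos hp_zero n v u)
      (fun n => (hbound n u v).trans_eq (mul_comm _ _))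
      (((summable_geometric_of_lt_one hrho0.le hrho1)).mul_left (lam ^ G.dist v u))
  have hfsumm : ∀ x' : S, Summable (fun n => fpass p z n x') := fun x' =>
    Summable.of_nonneg_of_le (fun n => aux_fpass_nonneg G p hp_pos hp_zero z n x')
      (fun n => aux_fpass_le_pn G p hp_pos hp_zero z n x') (hsumm z x')
  -- decomposition
  have hdecomp : ∀ (u : S) (n : ℕ) (x' : S), G.dist x' z + G.dist z u = G.dist x' u →
      pn p n x' u = ∑ k ∈ Finset.range (n+1), fpass p z k x' * pn p (n-k) z u := by
    intro u n
    induction n with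
    | zero =>
      intro x' hgeo'
      by_cases hxz : x' = z
      · subst hxz
        rw [Finset.sum_range_one, fpass_zero, if_pos rfl, one_mul]
      · have hx'u : x' ≠ u := by
          intro h; subst h
          rw [SimpleGraph.dist_self] at hgeo'
          have h0 : G.dist x' z = 0 := by omega
          exact hxz (hconn.dist_eq_zero_iff.mp h0)
        rw [Finset.sum_range_one, fpass_zero, pn_zero, if_neg hxz, zero_mul, if_neg hx'u]
    | succ n ih =>
      intro x' hgeo'
      rw [Finset.sum_range_succ'
        (fun k => fpass p z k x' * pn p (n + 1 - k) z u) (n+1)]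
      simp only [Nat.succ_sub_succ]
      by_cases hxz : x' = z
      · subst hxz
        have hz : ∀ k ∈ Finset.range (n+1), fpass p x' (k+1) x' * pn p (n-k) x' u = 0 := by
          intro k _
          rw [fpass_succ, if_pos rfl, zero_mul]
        rw [Finset.sum_congr rfl hz, Finset.sum_const_zero, zero_add, fpass_zero,
          if_pos rfl, one_mul, Nat.sub_zero]
      · rw [pn_succ, aux_tsum_nbr G p hp_zero]
        have hterm : ∀ w ∈ G.neighborFinset x', p x' w * pn p n w u =
            ∑ k ∈ Finset.range (n+1), p x' w * (fpass p z k w * pn p (n-k) z u) := by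
          intro w hw
          rw [ih w (aux_geo_adj G hconn hacyc hxz hgeo'
            ((SimpleGraph.mem_neighborFinset _ _ _).mp hw)), Finset.mul_sum]
        rw [Finset.sum_congr rfl hterm, Finset.sum_comm]
        have hinner : ∀ k ∈ Finset.range (n+1),
            ∑ w ∈ G.neighborFinset x', p x' w * (fpass p z k w * pn p (n-k) z u)
            = fpass p z (k+1) x' * pn p (n-k) z u := by
          intro k _
          rw [fpass_succ, if_neg hxz, aux_tsum_nbr G p hp_zero, Finset.sum_mul]
          exact Finset.sum_congr rfl fun w _ => by ring
        rw [Finset.sum_congr rfl hinner, fpass_zero, if_neg hxz, zero_mul, add_zero]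
  -- assembly
  have key : ∀ u : S, G.dist x z + G.dist z u = G.dist x u →
      green p x u = (∑' k, fpass p z k x) * green p z u := by
    intro u hu
    have h1 : green p x u = ∑' n, ∑ k ∈ Finset.range (n+1), fpass p z k x * pn p (n-k) z u :=
      tsum_congr fun n => hdecomp u n x hu
    have hf' : Summable (fun n => ‖fpass p z n x‖) :=
      (hfsumm x).congr fun n =>
        (Real.norm_of_nonneg (aux_fpass_nonneg G p hp_pos hp_zero z n x)).symm
    have hg' : Summable (fun n => ‖pn p n z u‖) :=
      (hsumm u z).congr fun n =>
        (Real.norm_of_nonneg (aux_pn_nonneg G p hp_pos hp_zero n z u)).symm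
    rw [h1, green, ← tsum_mul_tsum_eq_tsum_sum_range_of_summable_norm hf' hg']
  have e1 := key y hgeo
  have e2 := key z (by rw [SimpleGraph.dist_self, Nat.add_zero])
  rw [e1, e2]
  ring

end
end

section
/- If z lies on the geodesic from x to y, i.e. d(x,z) + d(z,y) = d(x,y), then H(x,y) = H(x,z) · H(z,y), where H(a,b) = P_a[∃ n ≥ 0, X_n = b] is the probability that the chain started at a ever hits b. -/
open MeasureTheory
open scoped Classical ENNReal

noncomputable section

namespace HitGeodesicAux

variable {S : Type*}

/-- Extension of a finite word by the constant `b`. -/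
def ext (n : ℕ) (g : Fin n → S) (b : S) : ℕ → S :=
  fun k => if h : k < n then g ⟨k, h⟩ else b

lemma ext_lt {n : ℕ} {g : Fin n → S} {b : S} {k : ℕ} (h : k < n) :
    ext n g b k = g ⟨k, h⟩ := dif_pos h

lemma ext_ge {n : ℕ} {g : Fin n → S} {b : S} {k : ℕ} (h : ¬ k < n) :
    ext n g b k = b := dif_neg h

/-- Weight of a first-hitting word. -/
def wt (p : S → S → ℝ) (a b : S) (i : Σ n : ℕ, Fin n → S) : ℝ≥0∞ :=
  if ∀ k : Fin i.1, i.2 k ≠ b then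
    ENNReal.ofReal ((if ext i.1 i.2 b 0 = a then (1:ℝ) else 0) *
      ∏ k ∈ Finset.range i.1, p (ext i.1 i.2 b k) (ext i.1 i.2 b (k+1)))
  else 0

lemma wt_def (p : S → S → ℝ) (a b : S) (n : ℕ) (g : Fin n → S) :
    wt p a b ⟨n, g⟩ =
      if ∀ k : Fin n, g k ≠ b then
        ENNReal.ofReal ((if ext n g b 0 = a then (1:ℝ) else 0) *
          ∏ k ∈ Finset.range n, p (ext n g b k) (ext n g b (k+1)))
      else 0 := rfl

section Graph

variable (G : SimpleGraph S)

lemma walk_visits (hconn : G.Connected) (hacyc : G.IsAcyclic) {x y z : S}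
    (hd : G.dist x z + G.dist z y = G.dist x y)
    (w : G.Walk x y) : z ∈ w.support := by
  classical
  obtain ⟨q1, hq1⟩ := hconn.exists_walk_length_eq_dist x z
  obtain ⟨q2, hq2⟩ := hconn.exists_walk_length_eq_dist z y
  have hq : (q1.append q2).IsPath := by
    apply SimpleGraph.Walk.isPath_of_length_eq_dist
    rw [SimpleGraph.Walk.length_append, hq1, hq2, hd]
  have huniq := hacyc.path_unique ⟨w.bypass, w.bypass_isPath⟩ ⟨q1.append q2, hq⟩
  have hz : z ∈ (q1.append q2).support := by
    rw [SimpleGraph.Walk.mem_support_append_iff]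
    exact Or.inl q1.end_mem_support
  have hmem : z ∈ w.bypass.support := by
    have h2 : w.bypass = q1.append q2 := congrArg Subtype.val huniq
    rw [h2]; exact hz
  exact w.support_bypass_subset hmem

lemma chain_walk : ∀ (n : ℕ) (f : ℕ → S), (∀ k < n, G.Adj (f k) (f (k+1))) →
    ∃ w : G.Walk (f 0) (f n), ∀ v ∈ w.support, ∃ k ≤ n, f k = v := by
  intro n
  induction n with
  | zero =>
    intro f _
    exact ⟨SimpleGraph.Walk.nil, by intro v hv; simp at hv; exact ⟨0, le_refl _, hv.symm⟩⟩
  | succ n ih =>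
    intro f hadj
    obtain ⟨w, hw⟩ := ih f (fun k hk => hadj k (Nat.lt_succ_of_lt hk))
    refine ⟨w.concat (hadj n (Nat.lt_succ_self n)), ?_⟩
    intro v hv
    rw [SimpleGraph.Walk.support_concat, List.mem_append,
      List.mem_singleton] at hv
    rcases hv with hv | hv
    · obtain ⟨k, hk, hfk⟩ := hw v hv
      exact ⟨k, Nat.le_succ_of_le hk, hfk⟩
    · exact ⟨n + 1, le_refl _, hv.symm⟩

lemma chain_visits (hconn : G.Connected) (hacyc : G.IsAcyclic) {x y z : S}
    (hd : G.dist x z + G.dist z y = G.dist x y)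
    (n : ℕ) (f : ℕ → S) (h0 : f 0 = x) (hn : f n = y)
    (hadj : ∀ k < n, G.Adj (f k) (f (k+1))) : ∃ k ≤ n, f k = z := by
  obtain ⟨w, hw⟩ := chain_walk G n f hadj
  subst h0; subst hn
  exact hw z (walk_visits G hconn hacyc hd w)

end Graph

section Wt

variable (G : SimpleGraph S) (p : S → S → ℝ)
variable (hp_pos : ∀ x y, 0 < p x y ↔ G.Adj x y)
variable (hp_zero : ∀ x y, ¬ G.Adj x y → p x y = 0)

include hp_pos hp_zero in
lemma hp_nonneg : ∀ u v, 0 ≤ p u v := by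
  intro u v
  by_cases h : G.Adj u v
  · exact le_of_lt ((hp_pos u v).mpr h)
  · rw [hp_zero u v h]

include hp_pos hp_zero in
lemma wt_ne_zero_iff (a b : S) (n : ℕ) (g : Fin n → S) :
    wt p a b ⟨n, g⟩ ≠ 0 ↔
      (∀ k : Fin n, g k ≠ b) ∧ ext n g b 0 = a ∧
        ∀ k < n, G.Adj (ext n g b k) (ext n g b (k+1)) := by
  unfold wt
  by_cases havd : ∀ k : Fin n, g k ≠ b
  · rw [if_pos havd, and_iff_right havd]
    rw [ne_eq, ENNReal.ofReal_eq_zero, not_le]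
    by_cases ha : ext n g b 0 = a
    · rw [if_pos ha, one_mul, and_iff_right ha]
      constructor
      · intro hpos k hk
        by_contra hadj
        have h0 : p (ext n g b k) (ext n g b (k+1)) = 0 := hp_zero _ _ hadj
        have := Finset.prod_eq_zero (f := fun j => p (ext n g b j) (ext n g b (j+1)))
          (Finset.mem_range.mpr hk) h0
        rw [this] at hpos; exact lt_irrefl 0 hpos
      · intro hadj
        apply Finset.prod_pos
        intro k hk
        exact (hp_pos _ _).mpr (hadj k (Finset.mem_range.mp hk))
    · rw [if_neg ha, zero_mul]
      simp [ha]
  · rw [if_neg havd]; simp [havd]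

lemma wt_eq_of {a b : S} {n : ℕ} {g : Fin n → S} (havd : ∀ k : Fin n, g k ≠ b)
    (ha : ext n g b 0 = a) :
    wt p a b ⟨n, g⟩ = ENNReal.ofReal
      (∏ k ∈ Finset.range n, p (ext n g b k) (ext n g b (k+1))) := by
  unfold wt
  rw [if_pos havd, if_pos ha, one_mul]

end Wt


section Cat

/-- Concatenation of two finite words. -/
def cat (i j : Σ n : ℕ, Fin n → S) : Σ n : ℕ, Fin n → S :=
  ⟨i.1 + j.1, fun k => if h : (k : ℕ) < i.1 then i.2 ⟨k, h⟩
    else j.2 ⟨(k : ℕ) - i.1, by have hk := k.2; omega⟩⟩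

lemma ext_cat_le {m r : ℕ} (u : Fin m → S) (v : Fin r → S) (b c : S) (hr : 0 < r)
    (hv0 : v ⟨0, hr⟩ = c) :
    ∀ k ≤ m, ext (m + r) (cat ⟨m, u⟩ ⟨r, v⟩).2 b k = ext m u c k := by
  intro k hk
  rcases lt_or_eq_of_le hk with h | h
  · erw [ext_lt (show k < m + r by omega), ext_lt h]
    simp only [cat]
    rw [dif_pos h]
  · subst h
    erw [ext_lt (show k < k + r by omega), ext_ge (lt_irrefl k)]
    simp only [cat]
    rw [dif_neg (lt_irrefl k)]
    rw [← hv0]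
    congr 1
    exact Fin.eq_of_val_eq (by simp)

lemma ext_cat_ge {m r : ℕ} (u : Fin m → S) (v : Fin r → S) (b : S) :
    ∀ k ≤ r, ext (m + r) (cat ⟨m, u⟩ ⟨r, v⟩).2 b (m + k) = ext r v b k := by
  intro k hk
  rcases lt_or_eq_of_le hk with h | h
  · erw [ext_lt (show m + k < m + r by omega), ext_lt h]
    simp only [cat]
    rw [dif_neg (show ¬ m + k < m by omega)]
    congr 1
    exact Fin.eq_of_val_eq (by simp)
  · subst h
    erw [ext_ge (show ¬ m + k < m + k by omega), ext_ge (lt_irrefl k)]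

end Cat

section Key

variable (G : SimpleGraph S) (p : S → S → ℝ)

include G in
lemma wt_props (hp_pos : ∀ x y, 0 < p x y ↔ G.Adj x y)
    (hp_zero : ∀ x y, ¬ G.Adj x y → p x y = 0)
    {a b : S} (hba : b ≠ a) {m : ℕ} {u : Fin m → S}
    (hu : wt p a b ⟨m, u⟩ ≠ 0) :
    (∀ k : Fin m, u k ≠ b) ∧ ∃ hm : 0 < m, u ⟨0, hm⟩ = a ∧
      (ext m u b 0 = a ∧ ∀ k < m, G.Adj (ext m u b k) (ext m u b (k+1))) := by
  obtain ⟨havd, h0, hadj⟩ := (wt_ne_zero_iff G p hp_pos hp_zero a b m u).mp hu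
  have hm : 0 < m := by
    by_contra hm
    rw [ext_ge (by omega)] at h0
    exact hba h0
  refine ⟨havd, hm, ?_, h0, hadj⟩
  rw [← h0]
  exact (ext_lt hm).symm

lemma wt_cat (hconn : G.Connected) (hacyc : G.IsAcyclic)
    (hp_pos : ∀ x y, 0 < p x y ↔ G.Adj x y)
    (hp_zero : ∀ x y, ¬ G.Adj x y → p x y = 0)
    {x y z : S} (hd : G.dist x z + G.dist z y = G.dist x y)
    (hzx : z ≠ x) (hzy : z ≠ y)
    {m r : ℕ} {u : Fin m → S} {v : Fin r → S}
    (hu : wt p x z ⟨m, u⟩ ≠ 0) (hv : wt p z y ⟨r, v⟩ ≠ 0) :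
    wt p x y (cat ⟨m, u⟩ ⟨r, v⟩) = wt p x z ⟨m, u⟩ * wt p z y ⟨r, v⟩ := by
  obtain ⟨huavd, hm, hu0', hu0, huadj⟩ := wt_props G p hp_pos hp_zero hzx hu
  obtain ⟨hvavd, hr, hv0', hv0, hvadj⟩ := wt_props G p hp_pos hp_zero hzy.symm hv
  have hlow := ext_cat_le u v y z hr hv0'
  have hhigh := ext_cat_ge u v y
  have havd : ∀ k : Fin (m + r), (cat ⟨m, u⟩ ⟨r, v⟩).2 k ≠ y := by
    intro k
    by_cases h : (k : ℕ) < m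
    · simp only [cat]
      rw [dif_pos h]
      intro hky
      obtain ⟨t, ht, htz⟩ := chain_visits G hconn hacyc hd k (ext m u z)
        hu0 (by rw [ext_lt h]; exact hky) (fun j hj => huadj j (by omega))
      rw [ext_lt (by omega : t < m)] at htz
      exact huavd _ htz
    · simp only [cat]
      rw [dif_neg h]
      exact hvavd _
  have hF0 : ext (m + r) (cat ⟨m, u⟩ ⟨r, v⟩).2 y 0 = x := by
    rw [hlow 0 (Nat.zero_le m)]; exact hu0
  have hcat : cat ⟨m, u⟩ ⟨r, v⟩ = ⟨m + r, (cat ⟨m, u⟩ ⟨r, v⟩).2⟩ := rfl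
  rw [hcat, wt_def p x y (m + r) (cat ⟨m, u⟩ ⟨r, v⟩).2, if_pos havd, if_pos hF0, one_mul]
  rw [wt_eq_of p huavd hu0, wt_eq_of p hvavd hv0]
  rw [← ENNReal.ofReal_mul (Finset.prod_nonneg
    (fun k _ => hp_nonneg G p hp_pos hp_zero _ _))]
  congr 1
  rw [Finset.prod_range_add]
  congr 1
  · apply Finset.prod_congr rfl
    intro k hk
    rw [Finset.mem_range] at hk
    rw [hlow k (le_of_lt hk), hlow (k+1) hk]
  · apply Finset.prod_congr rfl
    intro k hk
    rw [Finset.mem_range] at hk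
    rw [hhigh k (le_of_lt hk), show m + k + 1 = m + (k+1) from rfl, hhigh (k+1) hk]

lemma key (hconn : G.Connected) (hacyc : G.IsAcyclic)
    (hp_pos : ∀ x y, 0 < p x y ↔ G.Adj x y)
    (hp_zero : ∀ x y, ¬ G.Adj x y → p x y = 0)
    {x y z : S} (hd : G.dist x z + G.dist z y = G.dist x y)
    (hzx : z ≠ x) (hzy : z ≠ y) :
    ∑' i : Σ n : ℕ, Fin n → S, wt p x y i
      = (∑' i : Σ n : ℕ, Fin n → S, wt p x z i)
        * (∑' i : Σ n : ℕ, Fin n → S, wt p z y i) := by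
  classical
  have hxy : x ≠ y := by
    intro h; subst h
    have h0 : G.dist x z = 0 := by
      have hs : G.dist x x = 0 := SimpleGraph.dist_self
      omega
    exact hzx ((hconn.dist_eq_zero_iff).mp h0).symm
  have hrhs : (∑' i : Σ n : ℕ, Fin n → S, wt p x z i)
      * (∑' i : Σ n : ℕ, Fin n → S, wt p z y i)
      = ∑' ij : (Σ n : ℕ, Fin n → S) × (Σ n : ℕ, Fin n → S),
          wt p x z ij.1 * wt p z y ij.2 := by
    rw [ENNReal.tsum_prod', ← ENNReal.tsum_mul_right]
    exact tsum_congr fun i => (ENNReal.tsum_mul_left).symm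
  rw [hrhs]
  refine tsum_eq_tsum_of_ne_zero_bij (fun q => cat q.1.1 q.1.2) ?_ ?_ ?_
  · -- injectivity
    rintro ⟨⟨⟨m, u⟩, ⟨r, v⟩⟩, hq⟩ ⟨⟨⟨m', u'⟩, ⟨r', v'⟩⟩, hq'⟩ heq
    simp only [Function.mem_support] at hq hq'
    obtain ⟨hune, hvne⟩ := mul_ne_zero_iff.mp hq
    obtain ⟨hune', hvne'⟩ := mul_ne_zero_iff.mp hq'
    obtain ⟨huavd, hm, hu0', -, -⟩ := wt_props G p hp_pos hp_zero hzx hune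
    obtain ⟨hvavd, hr, hv0', -, -⟩ := wt_props G p hp_pos hp_zero hzy.symm hvne
    obtain ⟨huavd', hm', hu0'', -, -⟩ := wt_props G p hp_pos hp_zero hzx hune'
    obtain ⟨hvavd', hr', hv0'', -, -⟩ := wt_props G p hp_pos hp_zero hzy.symm hvne'
    simp only at heq
    have hfst : m + r = m' + r' := congrArg Sigma.fst heq
    have hF : ext (m + r) (cat ⟨m, u⟩ ⟨r, v⟩).2 y
        = ext (m' + r') (cat ⟨m', u'⟩ ⟨r', v'⟩).2 y :=
      congrArg (fun i : Σ n : ℕ, Fin n → S => ext i.1 i.2 y) heq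
    have hlow := ext_cat_le u v y z hr hv0'
    have hlow' := ext_cat_le u' v' y z hr' hv0''
    have hhigh := ext_cat_ge u v y
    have hhigh' := ext_cat_ge u' v' y
    have hmm' : m = m' := by
      by_contra hne
      rcases Nat.lt_or_ge m m' with h | h
      · have h1 : ext (m + r) (cat ⟨m, u⟩ ⟨r, v⟩).2 y m = z := by
          rw [hlow m (le_refl m), ext_ge (lt_irrefl m)]
        have h2 : ext (m' + r') (cat ⟨m', u'⟩ ⟨r', v'⟩).2 y m = u' ⟨m, h⟩ := by
          rw [hlow' m (le_of_lt h), ext_lt h]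
        rw [congrFun hF m, h2] at h1
        exact huavd' _ h1
      · have h : m' < m := by omega
        have h1 : ext (m' + r') (cat ⟨m', u'⟩ ⟨r', v'⟩).2 y m' = z := by
          rw [hlow' m' (le_refl m'), ext_ge (lt_irrefl m')]
        have h2 : ext (m + r) (cat ⟨m, u⟩ ⟨r, v⟩).2 y m' = u ⟨m', h⟩ := by
          rw [hlow m' (le_of_lt h), ext_lt h]
        rw [← congrFun hF m', h2] at h1
        exact huavd _ h1
    subst hmm'
    have hrr' : r = r' := by omega
    subst hrr'
    have huu' : u = u' := by
      funext k
      have h1 : ext (m + r) (cat ⟨m, u⟩ ⟨r, v⟩).2 y k = u k := by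
        rw [hlow k (le_of_lt k.2), ext_lt k.2]
      have h2 : ext (m + r) (cat ⟨m, u'⟩ ⟨r, v'⟩).2 y k = u' k := by
        rw [hlow' k (le_of_lt k.2), ext_lt k.2]
      rw [← h1, ← h2, congrFun hF k]
    subst huu'
    have hvv' : v = v' := by
      funext k
      have h1 : ext (m + r) (cat ⟨m, u⟩ ⟨r, v⟩).2 y (m + k) = v k := by
        rw [hhigh k (le_of_lt k.2), ext_lt k.2]
      have h2 : ext (m + r) (cat ⟨m, u⟩ ⟨r, v'⟩).2 y (m + k) = v' k := by
        rw [hhigh' k (le_of_lt k.2), ext_lt k.2]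
      rw [← h1, ← h2, congrFun hF (m + k)]
    subst hvv'
    rfl
  · -- surjectivity onto the support
    rintro ⟨n, gw⟩ hi0
    simp only [Function.mem_support] at hi0
    obtain ⟨havd, h0, hadj⟩ := (wt_ne_zero_iff G p hp_pos hp_zero x y n gw).mp hi0
    have hn0 : 0 < n := by
      by_contra h
      rw [ext_ge (by omega)] at h0
      exact hxy h0.symm
    have hFn : ext n gw y n = y := ext_ge (lt_irrefl n)
    obtain ⟨t0, ht0n, ht0z⟩ := chain_visits G hconn hacyc hd n (ext n gw y) h0 hFn hadj
    have hex : ∃ t, t < n ∧ ext n gw y t = z := by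
      refine ⟨t0, ?_, ht0z⟩
      rcases lt_or_eq_of_le ht0n with h | h
      · exact h
      · subst h; rw [hFn] at ht0z; exact absurd ht0z.symm hzy
    have hexm : ∃ m, (m < n ∧ ext n gw y m = z) ∧
        ∀ t < m, ¬ (t < n ∧ ext n gw y t = z) :=
      ⟨Nat.find hex, Nat.find_spec hex, fun t ht => Nat.find_min hex ht⟩
    obtain ⟨m, ⟨hmn, hmz⟩, hmin0⟩ := hexm
    obtain ⟨r, hnm⟩ : ∃ r, n = m + r := ⟨n - m, by omega⟩
    subst hnm
    have hmin : ∀ t < m, ext (m + r) gw y t ≠ z :=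
      fun t ht hc => hmin0 t ht ⟨by omega, hc⟩
    have hm0 : 0 < m := by
      by_contra h
      have hm00 : (0:ℕ) = m := by omega
      rw [hm00] at h0
      rw [h0] at hmz
      exact hzx hmz.symm
    have hr0 : 0 < r := by omega
    set u : Fin m → S := fun k => gw ⟨k.1, by have := k.2; omega⟩ with hu
    set v : Fin r → S := fun k => gw ⟨m + k.1, by have := k.2; omega⟩ with hv
    have hu_ne : wt p x z ⟨m, u⟩ ≠ 0 := by
      rw [wt_ne_zero_iff G p hp_pos hp_zero]
      refine ⟨?_, ?_, ?_⟩
      · intro k hc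
        exact hmin k.1 k.2 (by rw [ext_lt (show (k:ℕ) < m + r by have := k.2; omega)]; exact hc)
      · rw [ext_lt hm0]
        rw [ext_lt (show (0:ℕ) < m + r by omega)] at h0
        exact h0
      · intro k hk
        have he : ∀ t ≤ m, ext m u z t = ext (m + r) gw y t := by
          intro t ht
          rcases lt_or_eq_of_le ht with h | h
          · rw [ext_lt h, ext_lt (show t < m + r by omega)]
          · rw [h, ext_ge (lt_irrefl m)]
            exact hmz.symm
        rw [he k (le_of_lt hk), he (k+1) hk]
        exact hadj k (by omega)
    have hv_ne : wt p z y ⟨r, v⟩ ≠ 0 := by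
      rw [wt_ne_zero_iff G p hp_pos hp_zero]
      refine ⟨?_, ?_, ?_⟩
      · intro k hc
        exact havd _ hc
      · rw [ext_lt hr0]
        rw [ext_lt (show m < m + r by omega)] at hmz
        exact hmz
      · intro k hk
        have he : ∀ t ≤ r, ext r v y t = ext (m + r) gw y (m + t) := by
          intro t ht
          rcases lt_or_eq_of_le ht with h | h
          · rw [ext_lt h, ext_lt (show m + t < m + r by omega)]
          · rw [h, ext_ge (lt_irrefl r), ext_ge (show ¬ m + r < m + r from lt_irrefl _)]
        rw [he k (le_of_lt hk), he (k+1) hk]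
        exact hadj (m + k) (by omega)
    refine ⟨⟨(⟨m, u⟩, ⟨r, v⟩), ?_⟩, ?_⟩
    · simp only [Function.mem_support]
      exact mul_ne_zero hu_ne hv_ne
    · show cat ⟨m, u⟩ ⟨r, v⟩ = ⟨m + r, gw⟩
      have hfun : (cat ⟨m, u⟩ ⟨r, v⟩).2 = gw := by
        funext k
        have hkr : (k : ℕ) < m + r := k.2
        simp only [cat]
        by_cases h : (k : ℕ) < m
        · rw [dif_pos h, hu]
          rfl
        · rw [dif_neg h]
          have hk2 : (⟨m + ((k : ℕ) - m), by omega⟩ : Fin (m + r)) = k :=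
            Fin.eq_of_val_eq (by simp; omega)
          exact congrArg gw hk2
      show (⟨m + r, (cat ⟨m, u⟩ ⟨r, v⟩).2⟩ : Σ n : ℕ, Fin n → S) = ⟨m + r, gw⟩
      rw [hfun]
  · -- value preservation
    rintro ⟨⟨⟨m, u⟩, ⟨r, v⟩⟩, hq⟩
    simp only [Function.mem_support] at hq
    obtain ⟨hune, hvne⟩ := mul_ne_zero_iff.mp hq
    exact wt_cat G p hconn hacyc hp_pos hp_zero hd hzx hzy hune hvne

end Key

section Meas

variable [Countable S] [MeasurableSpace S] [MeasurableSingletonClass S]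

lemma hit_eq (p : S → S → ℝ) (P : S → Measure (ℕ → S))
    (hP : ∀ (x : S) (n : ℕ) (f : ℕ → S),
      P x {ω | ∀ k ≤ n, ω k = f k} =
        ENNReal.ofReal ((if f 0 = x then 1 else 0) *
          ∏ k ∈ Finset.range n, p (f k) (f (k + 1))))
    (a b : S) :
    P a {ω | ∃ n, ω n = b} = ∑' i : Σ n : ℕ, Fin n → S, wt p a b i := by
  classical
  set D : ℕ → Set (ℕ → S) := fun n => {ω | ω n = b ∧ ∀ k < n, ω k ≠ b} with hD
  have hmeas_pt : ∀ (k : ℕ) (c : S), MeasurableSet {ω : ℕ → S | ω k = c} := by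
    intro k c
    show MeasurableSet ((fun ω : ℕ → S => ω k) ⁻¹' {c})
    exact measurable_pi_apply k (measurableSet_singleton c)
  have hcylmeas : ∀ (n : ℕ) (f : ℕ → S),
      MeasurableSet {ω : ℕ → S | ∀ k ≤ n, ω k = f k} := by
    intro n f
    have : {ω : ℕ → S | ∀ k ≤ n, ω k = f k}
        = ⋂ (k : ℕ) (_ : k ≤ n), {ω : ℕ → S | ω k = f k} := by
      ext ω; simp
    rw [this]
    exact MeasurableSet.iInter fun k => MeasurableSet.iInter fun _ => hmeas_pt k _
  have hDmeas : ∀ n, MeasurableSet (D n) := by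
    intro n
    have : D n = {ω : ℕ → S | ω n = b} ∩
        ⋂ (k : ℕ) (_ : k < n), {ω : ℕ → S | ω k = b}ᶜ := by
      ext ω; simp [hD]
    rw [this]
    exact (hmeas_pt n b).inter
      (MeasurableSet.iInter fun k => MeasurableSet.iInter fun _ => (hmeas_pt k b).compl)
  have hUnion : {ω : ℕ → S | ∃ n, ω n = b} = ⋃ n, D n := by
    ext ω
    simp only [Set.mem_setOf_eq, Set.mem_iUnion, hD]
    constructor
    · intro h
      exact ⟨Nat.find h, Nat.find_spec h, fun k hk => Nat.find_min h hk⟩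
    · rintro ⟨n, hn, -⟩; exact ⟨n, hn⟩
  have hdisj : Pairwise (Function.onFun Disjoint D) := by
    intro m n hmn
    rcases lt_or_gt_of_ne hmn with h | h
    · rw [Function.onFun, Set.disjoint_left]
      rintro ω ⟨hm, -⟩ ⟨-, hn⟩
      exact hn m h hm
    · rw [Function.onFun, Set.disjoint_left]
      rintro ω ⟨-, hm⟩ ⟨hn, -⟩
      exact hm n h hn
  rw [hUnion, measure_iUnion hdisj hDmeas, ENNReal.tsum_sigma']
  congr 1
  funext n
  set s : Set (Fin n → S) := {g | ∀ k : Fin n, g k ≠ b} with hs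
  have hDn : D n = ⋃ g : s, {ω : ℕ → S | ∀ k ≤ n, ω k = ext n g.1 b k} := by
    ext ω
    simp only [Set.mem_iUnion, hD, Set.mem_setOf_eq]
    constructor
    · rintro ⟨hnb, hlt⟩
      refine ⟨⟨fun k => ω k, fun k => hlt k k.2⟩, ?_⟩
      intro k hk
      rcases lt_or_eq_of_le hk with h | h
      · rw [ext_lt h]
      · subst h; rw [ext_ge (lt_irrefl k), hnb]
    · rintro ⟨⟨g, hg⟩, hω⟩
      constructor
      · rw [hω n (le_refl n), ext_ge (lt_irrefl n)]
      · intro k hk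
        rw [hω k (le_of_lt hk), ext_lt hk]
        exact hg ⟨k, hk⟩
  have hsub_disj : Pairwise (Function.onFun Disjoint
      (fun g : s => {ω : ℕ → S | ∀ k ≤ n, ω k = ext n g.1 b k})) := by
    intro g g' hgg'
    rw [Function.onFun, Set.disjoint_left]
    intro ω hω hω'
    apply hgg'
    apply Subtype.ext
    funext k
    have h1 : ω k = g.1 k := by
      have := hω k (le_of_lt k.2)
      rw [ext_lt k.2] at this; simpa using this
    have h2 : ω k = g'.1 k := by
      have := hω' k (le_of_lt k.2)
      rw [ext_lt k.2] at this; simpa using this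
    rw [← h1, h2]
  rw [hDn, measure_iUnion hsub_disj (fun g => hcylmeas n (ext n g.1 b))]
  have hval : ∀ g : s, P a {ω : ℕ → S | ∀ k ≤ n, ω k = ext n g.1 b k}
      = wt p a b ⟨n, g.1⟩ := by
    intro g
    have hg2 : ∀ k : Fin n, (g : Fin n → S) k ≠ b := g.2
    rw [hP a n (ext n g.1 b), wt_def, if_pos hg2]
  rw [tsum_congr hval]
  refine tsum_subtype_eq_of_support_subset
    (f := fun g : Fin n → S => wt p a b ⟨n, g⟩) (s := s) ?_
  intro g hg
  simp only [Function.mem_support] at hg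
  by_contra hc
  apply hg
  have hc' : ¬ ∀ k : Fin n, g k ≠ b := hc
  rw [wt_def, if_neg hc']

end Meas

end HitGeodesicAux

/-- If `z` lies on the geodesic from `x` to `y`, then
`H(x,y) = H(x,z) ⬝ H(z,y)`, where `H(a,b)` is the probability that the chain
started at `a` ever hits `b`. The laws `P x` of the canonical chain are
characterised by their values on cylinder sets. -/
theorem hit_mul_of_mem_geodesic
    {S : Type*} [Countable S] [MeasurableSpace S] [MeasurableSingletonClass S]
    (G : SimpleGraph S) [∀ x : S, Fintype (G.neighborSet x)]
    (hconn : G.Connected) (hacyc : G.IsAcyclic)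
    (p : S → S → ℝ)
    (hp_pos : ∀ x y, 0 < p x y ↔ G.Adj x y)
    (hp_zero : ∀ x y, ¬ G.Adj x y → p x y = 0)
    (hp_sum : ∀ x, ∑ y ∈ G.neighborFinset x, p x y = 1)
    (P : S → Measure (ℕ → S)) (hPprob : ∀ x, IsProbabilityMeasure (P x))
    (hP : ∀ (x : S) (n : ℕ) (f : ℕ → S),
      P x {ω | ∀ k ≤ n, ω k = f k} =
        ENNReal.ofReal ((if f 0 = x then 1 else 0) *
          ∏ k ∈ Finset.range n, p (f k) (f (k + 1)))) :
    ∀ x y z : S, G.dist x z + G.dist z y = G.dist x y →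
      (P x {ω | ∃ n, ω n = y}).toReal =
        (P x {ω | ∃ n, ω n = z}).toReal * (P z {ω | ∃ n, ω n = y}).toReal := by
  intro x y z hd
  classical
  have hself : ∀ a : S, P a {ω | ∃ n, ω n = a} = 1 := by
    intro a
    have hprob := hPprob a
    refine le_antisymm ?_ ?_
    · exact le_trans (measure_mono (Set.subset_univ _)) (le_of_eq measure_univ)
    · have h1 : P a {ω | ∀ k ≤ 0, ω k = (fun _ => a) k} = 1 := by
        rw [hP a 0 (fun _ => a)]
        norm_num
      calc (1:ℝ≥0∞) = P a {ω | ∀ k ≤ 0, ω k = (fun _ => a) k} := h1.symm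
        _ ≤ P a {ω | ∃ n, ω n = a} :=
          measure_mono (fun ω hω => ⟨0, hω 0 (le_refl 0)⟩)
  by_cases hzx : z = x
  · subst hzx
    rw [hself z, ENNReal.toReal_one, one_mul]
  by_cases hzy : z = y
  · subst hzy
    rw [hself z, ENNReal.toReal_one, mul_one]
  · rw [← ENNReal.toReal_mul]
    congr 1
    rw [HitGeodesicAux.hit_eq p P hP x y, HitGeodesicAux.hit_eq p P hP x z,
      HitGeodesicAux.hit_eq p P hP z y]
    exact HitGeodesicAux.key G p hconn hacyc hp_pos hp_zero hd hzx hzy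

end
end

section
/- Under hypothesis (H), fix a geodesic ray γ from o and x ∈ S with projection π(x) = γ(k(x)). Then for every n ≥ k(x) one has G(x,γ(n)) · G(o,γ(k(x))) = G(o,γ(n)) · G(x,γ(k(x))); consequently the Martin kernel K(x) = lim_{n→∞} G(x,γ(n))/G(o,γ(n)) exists and equals G(x,π(x))/G(o,π(x)). -/
open Filter
open scoped Classical Topology

noncomputable section

namespace MKaux

variable {S : Type*} {G : SimpleGraph S}

/-- In a tree, every path is a geodesic. -/
lemma path_length_eq_dist (hconn : G.Connected) (hacyc : G.IsAcyclic)
    {x y : S} (P : G.Walk x y) (hP : P.IsPath) : P.length = G.dist x y := by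
  obtain ⟨W, hW⟩ := hconn.exists_walk_length_eq_dist x y
  have h1 : W.bypass.IsPath := W.bypass_isPath
  have h2 : (⟨P, hP⟩ : G.Path x y) = ⟨W.bypass, h1⟩ :=
    (SimpleGraph.isAcyclic_iff_path_unique.mp hacyc) _ _
  have hPb : P = W.bypass := congrArg Subtype.val h2
  have h3 : P.length ≤ W.length := hPb ▸ W.length_bypass_le
  have h4 : G.dist x y ≤ P.length := SimpleGraph.dist_le P
  omega

/-- Existence of a geodesic path. -/
lemma exists_geodesic_path (hconn : G.Connected) (x y : S) :
    ∃ P : G.Walk x y, P.IsPath ∧ P.length = G.dist x y := by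
  obtain ⟨W, hW⟩ := hconn.exists_walk_length_eq_dist x y
  refine ⟨W.bypass, W.bypass_isPath, le_antisymm ?_ (SimpleGraph.dist_le _)⟩
  calc W.bypass.length ≤ W.length := W.length_bypass_le
    _ = G.dist x y := hW

/-- In a tree, adjacent vertices have different distances to any vertex. -/
lemma adj_dist_ne (hconn : G.Connected) (hacyc : G.IsAcyclic)
    {z w : S} (y : S) (hzw : G.Adj z w) : G.dist z y ≠ G.dist w y := by
  intro hEq
  obtain ⟨P, hP, hlen⟩ := exists_geodesic_path hconn z y
  have hwP : w ∉ P.support := by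
    intro hw
    have hsplit := P.take_spec hw
    have hlen2 : (P.takeUntil w hw).length + (P.dropUntil w hw).length = P.length := by
      rw [← SimpleGraph.Walk.length_append, hsplit]
    have hd : G.dist w y ≤ (P.dropUntil w hw).length := SimpleGraph.dist_le _
    have ht : (P.takeUntil w hw).length ≠ 0 := by
      intro h0
      exact hzw.ne ((P.takeUntil w hw).eq_of_length_eq_zero h0)
    omega
  have : (SimpleGraph.Walk.cons hzw.symm P).length = G.dist w y :=
    path_length_eq_dist hconn hacyc _ (hP.cons hwP)
  rw [SimpleGraph.Walk.length_cons, hlen] at this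
  omega

/-- In a tree, the neighbour strictly closer to `y` is unique. -/
lemma closer_unique (hconn : G.Connected) (hacyc : G.IsAcyclic)
    {z y c₁ c₂ : S} (h1 : G.Adj z c₁) (h2 : G.Adj z c₂)
    (hd1 : G.dist c₁ y + 1 = G.dist z y) (hd2 : G.dist c₂ y + 1 = G.dist z y) :
    c₁ = c₂ := by
  obtain ⟨P₁, hP₁, hl₁⟩ := exists_geodesic_path hconn c₁ y
  obtain ⟨P₂, hP₂, hl₂⟩ := exists_geodesic_path hconn c₂ y
  have hz1 : z ∉ P₁.support := by
    intro hz
    have := SimpleGraph.dist_le (P₁.dropUntil z hz)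
    have hlen2 : (P₁.takeUntil z hz).length + (P₁.dropUntil z hz).length = P₁.length := by
      rw [← SimpleGraph.Walk.length_append, P₁.take_spec hz]
    omega
  have hz2 : z ∉ P₂.support := by
    intro hz
    have := SimpleGraph.dist_le (P₂.dropUntil z hz)
    have hlen2 : (P₂.takeUntil z hz).length + (P₂.dropUntil z hz).length = P₂.length := by
      rw [← SimpleGraph.Walk.length_append, P₂.take_spec hz]
    omega
  have hQ : (⟨SimpleGraph.Walk.cons h1 P₁, hP₁.cons hz1⟩ : G.Path z y)
      = ⟨SimpleGraph.Walk.cons h2 P₂, hP₂.cons hz2⟩ :=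
    (SimpleGraph.isAcyclic_iff_path_unique.mp hacyc) _ _
  have := congrArg (fun q : G.Path z y => q.1.getVert 1) hQ
  simpa [SimpleGraph.Walk.getVert_cons_succ] using this

end MKaux

namespace MKaux2
open MKaux SimpleGraph

variable {S : Type*} {G : SimpleGraph S}

/-- Every walk from `x` to `y'` passes through `w`, when `w ~ y'` and
`dist x y' = dist x w + 1`. -/
lemma sep_step (hconn : G.Connected) (hacyc : G.IsAcyclic)
    {x w y' : S} (hadj : G.Adj w y') (hd : G.dist x y' = G.dist x w + 1) :
    ∀ W : G.Walk x y', w ∈ W.support := by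
  obtain ⟨R, hR, hlR⟩ := exists_geodesic_path hconn x w
  have hy'R : y' ∉ R.support := by
    intro hy'
    have h1 : (R.takeUntil y' hy').length = G.dist x y' :=
      path_length_eq_dist hconn hacyc _ (hR.takeUntil hy')
    have h2 := R.length_takeUntil_le hy'
    omega
  have hW2 : (R.concat hadj).IsPath := by
    rw [← Walk.isPath_reverse_iff, Walk.reverse_concat]
    exact (hR.reverse).cons (by simpa using hy'R)
  intro W
  have h2 : (⟨W.bypass, W.bypass_isPath⟩ : G.Path x y')
      = ⟨R.concat hadj, hW2⟩ :=
    (SimpleGraph.isAcyclic_iff_path_unique.mp hacyc) _ _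
  have hb : W.bypass = R.concat hadj := congrArg Subtype.val h2
  apply W.support_bypass_subset
  rw [hb, Walk.support_concat]
  simp [List.concat_eq_append]

/-- Separation along a geodesic ray: every walk from `x` to `γ n` passes
through `γ k`, given the distance identity at step `k` and that `γ` is a ray. -/
lemma sep_ray (hconn : G.Connected) (hacyc : G.IsAcyclic)
    (γ : ℕ → S) (hadjγ : ∀ n, G.Adj (γ n) (γ (n + 1))) (hinj : Function.Injective γ)
    {x : S} {k : ℕ} (hd : G.dist x (γ (k + 1)) = G.dist x (γ k) + 1) :
    ∀ n, k ≤ n → ∀ W : G.Walk x (γ n), γ k ∈ W.support := by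
  intro n hn
  induction n with
  | zero =>
    intro W
    have : k = 0 := Nat.le_zero.mp hn
    subst this
    exact W.end_mem_support
  | succ m ih =>
    rcases Nat.lt_or_ge k (m + 1) with hk | hk
    · rcases Nat.lt_or_ge k m with hkm | hkm
      · -- k < m : extend walk by the edge γ(m+1) ~ γ m
        intro W
        have hsep := ih (Nat.le_of_lt hkm)
          (W.append (Walk.cons (hadjγ m).symm Walk.nil))
        rw [Walk.mem_support_append_iff] at hsep
        rcases hsep with h | h
        · exact h
        · simp [Walk.support_cons, Walk.support_nil] at h
          rcases h with h | h
          · exact absurd (hinj h) (by omega)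
          · exact absurd (hinj h) (by omega)
      · -- k = m : use sep_step
        have hkm' : k = m := by omega
        subst hkm'
        exact sep_step hconn hacyc (hadjγ k) hd
    · -- k = m + 1
      have : k = m + 1 := by omega
      subst this
      intro W
      exact W.end_mem_support

end MKaux2

namespace MKaux3
open MKaux MKaux2 SimpleGraph Finset

variable {S : Type*} {G : SimpleGraph S} [∀ x : S, Fintype (G.neighborSet x)]
variable {p : S → S → ℝ}

lemma pn_succ (hp_zero : ∀ x y, ¬ G.Adj x y → p x y = 0) (n : ℕ) (x y : S) :
    pn p (n + 1) x y = ∑ z ∈ G.neighborFinset x, p x z * pn p n z y := by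
  show (∑' z, p x z * pn p n z y) = _
  refine tsum_eq_sum fun z hz => ?_
  rw [hp_zero x z (fun h => hz (G.mem_neighborFinset x z |>.mpr h)), zero_mul]

lemma pn_nonneg (hp_nn : ∀ x y, 0 ≤ p x y) (hp_zero : ∀ x y, ¬ G.Adj x y → p x y = 0) :
    ∀ (n : ℕ) (x y : S), 0 ≤ pn p n x y := by
  intro n
  induction n with
  | zero => intro x y; show (0:ℝ) ≤ if x = y then 1 else 0; split <;> norm_num
  | succ m ih =>
    intro x y
    rw [pn_succ hp_zero]
    exact Finset.sum_nonneg fun z _ => mul_nonneg (hp_nn x z) (ih z y)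

lemma pn_pos_of_walk (hp_pos : ∀ x y, 0 < p x y ↔ G.Adj x y)
    (hp_zero : ∀ x y, ¬ G.Adj x y → p x y = 0)
    {x y : S} (W : G.Walk x y) : 0 < pn p W.length x y := by
  have hp_nn : ∀ x y, 0 ≤ p x y := by
    intro a b
    by_cases h : G.Adj a b
    · exact ((hp_pos a b).mpr h).le
    · rw [hp_zero a b h]
  induction W with
  | nil => show (0:ℝ) < if _ = _ then 1 else 0; simp
  | @cons a b c h W ih =>
    rw [Walk.length_cons, pn_succ hp_zero]
    have hb : b ∈ G.neighborFinset a := (G.mem_neighborFinset a b).mpr h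
    have h1 : 0 < p a b * pn p W.length b c :=
      mul_pos ((hp_pos a b).mpr h) ih
    have h2 : p a b * pn p W.length b c ≤
        ∑ z ∈ G.neighborFinset a, p a z * pn p W.length z c :=
      Finset.single_le_sum (fun z _ => mul_nonneg (hp_nn a z)
        (pn_nonneg hp_nn hp_zero _ z c)) hb
    linarith

end MKaux3

namespace MKaux4
open MKaux MKaux2 MKaux3 SimpleGraph Finset

variable {S : Type*} {G : SimpleGraph S} [∀ x : S, Fintype (G.neighborSet x)]
variable {p : S → S → ℝ} {η : ℝ}

lemma closer_exists (hconn : G.Connected) {z y : S} (hzy : z ≠ y) :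
    ∃ c, G.Adj z c ∧ G.dist c y + 1 = G.dist z y := by
  obtain ⟨W, hW⟩ := hconn.exists_walk_length_eq_dist z y
  cases W with
  | nil => exact absurd rfl hzy
  | @cons _ c _ h W' =>
    refine ⟨c, h, ?_⟩
    have h1 : G.dist c y ≤ W'.length := dist_le W'
    obtain ⟨Q, hQ⟩ := hconn.exists_walk_length_eq_dist c y
    have h2 : G.dist z y ≤ (Walk.cons h Q).length := dist_le _
    rw [Walk.length_cons, hQ] at h2
    rw [Walk.length_cons] at hW
    omega

lemma step_bound (hconn : G.Connected) (hacyc : G.IsAcyclic)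
    (hp_pos : ∀ x y, 0 < p x y ↔ G.Adj x y)
    (hp_sum : ∀ x, ∑ y ∈ G.neighborFinset x, p x y = 1)
    (hη : 0 < η) (hηlt : η < 1/2)
    (hHu : ∀ x y, G.Adj x y → p x y ≤ 1 / 2 - η)
    (y z : S) :
    ∑ w ∈ G.neighborFinset z, p z w * ((1+η)⁻¹) ^ G.dist w y
      ≤ (1 - η^2/2) * ((1+η)⁻¹) ^ G.dist z y := by
  have ht0 : (0:ℝ) < (1+η)⁻¹ := by positivity
  by_cases hzy : z = y
  · subst hzy
    have hdist : ∀ w ∈ G.neighborFinset z, p z w * ((1+η)⁻¹) ^ G.dist w z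
        = p z w * (1+η)⁻¹ := by
      intro w hw
      rw [G.mem_neighborFinset] at hw
      rw [dist_eq_one_iff_adj.mpr hw.symm, pow_one]
    rw [Finset.sum_congr rfl hdist, ← Finset.sum_mul, hp_sum, one_mul,
      SimpleGraph.dist_self, pow_zero, mul_one]
    rw [inv_le_iff_one_le_mul₀ (by linarith)]
    nlinarith
  · obtain ⟨c, hc, hdc⟩ := closer_exists hconn hzy
    have hcmem : c ∈ G.neighborFinset z := (G.mem_neighborFinset z c).mpr hc
    have hfar : ∀ w ∈ (G.neighborFinset z).erase c,
        G.dist w y = G.dist z y + 1 := by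
      intro w hw
      have hwc : w ≠ c := (Finset.mem_erase.mp hw).1
      have hwadj : G.Adj z w := (G.mem_neighborFinset z w).mp (Finset.mem_erase.mp hw).2
      obtain ⟨Q, hQ⟩ := hconn.exists_walk_length_eq_dist z y
      have h1 : G.dist w y ≤ G.dist z y + 1 := by
        have := dist_le (Walk.cons hwadj.symm Q)
        rw [Walk.length_cons, hQ] at this
        exact this
      obtain ⟨Q', hQ'⟩ := hconn.exists_walk_length_eq_dist w y
      have h2 : G.dist z y ≤ G.dist w y + 1 := by
        have := dist_le (Walk.cons hwadj Q')
        rw [Walk.length_cons, hQ'] at this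
        exact this
      have h3 : G.dist w y ≠ G.dist z y := adj_dist_ne hconn hacyc y hwadj.symm
      have h4 : G.dist w y + 1 ≠ G.dist z y := by
        intro h
        exact hwc (closer_unique hconn hacyc hwadj hc h hdc)
      omega
    rw [← Finset.add_sum_erase _ _ hcmem]
    have hsum2 : ∑ w ∈ (G.neighborFinset z).erase c, p z w * ((1+η)⁻¹) ^ G.dist w y
        = (1 - p z c) * ((1+η)⁻¹) ^ (G.dist z y + 1) := by
      rw [Finset.sum_congr rfl (fun w hw => by rw [hfar w hw]), ← Finset.sum_mul]
      congr 1
      have := hp_sum z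
      rw [← Finset.add_sum_erase _ _ hcmem] at this
      linarith
    rw [hsum2]
    set q := p z c with hq
    set d := G.dist c y with hdd
    have hdzy : G.dist z y = d + 1 := hdc.symm
    rw [hdzy]
    have hq1 : 0 < q := (hp_pos z c).mpr hc
    have hq2 : q ≤ 1/2 - η := hHu z c hc
    have h1η : (0:ℝ) < 1 + η := by linarith
    have key : q + (1 - q) * ((1+η)⁻¹)^2 ≤ (1 - η^2/2) * (1+η)⁻¹ := by
      rw [← sub_nonneg]
      have e : (1 - η^2/2) * (1+η)⁻¹ - (q + (1 - q) * ((1+η)⁻¹)^2)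
          = ((1 - η^2/2) * (1+η) - (q * (1+η)^2 + (1 - q))) * ((1+η)⁻¹)^2 := by
        field_simp
      rw [e]
      apply mul_nonneg _ (by positivity)
      nlinarith [mul_nonneg (by linarith : (0:ℝ) ≤ 1/2 - η - q)
        (by nlinarith : (0:ℝ) ≤ (1+η)^2 - 1)]
    calc q * ((1+η)⁻¹) ^ d + (1 - q) * ((1+η)⁻¹) ^ (d + 1 + 1)
        = (q + (1 - q) * ((1+η)⁻¹)^2) * ((1+η)⁻¹) ^ d := by ring
      _ ≤ ((1 - η^2/2) * (1+η)⁻¹) * ((1+η)⁻¹) ^ d := by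
          apply mul_le_mul_of_nonneg_right key (by positivity)
      _ = (1 - η^2/2) * ((1+η)⁻¹) ^ (d + 1) := by ring

end MKaux4

namespace MKaux5
open MKaux MKaux2 MKaux3 MKaux4 SimpleGraph Finset

variable {S : Type*} {G : SimpleGraph S} [∀ x : S, Fintype (G.neighborSet x)]
variable {p : S → S → ℝ} {η : ℝ}

lemma pn_le_geom (hconn : G.Connected) (hacyc : G.IsAcyclic)
    (hp_pos : ∀ x y, 0 < p x y ↔ G.Adj x y)
    (hp_zero : ∀ x y, ¬ G.Adj x y → p x y = 0)
    (hp_sum : ∀ x, ∑ y ∈ G.neighborFinset x, p x y = 1)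
    (hη : 0 < η) (hηlt : η < 1/2)
    (hHu : ∀ x y, G.Adj x y → p x y ≤ 1 / 2 - η)
    (y : S) : ∀ (m : ℕ) (z : S),
    pn p m z y ≤ (1 - η^2/2) ^ m * ((1+η)⁻¹) ^ G.dist z y := by
  have hp_nn : ∀ x y, 0 ≤ p x y := by
    intro a b
    by_cases h : G.Adj a b
    · exact ((hp_pos a b).mpr h).le
    · rw [hp_zero a b h]
  have hr0 : (0:ℝ) ≤ 1 - η^2/2 := by nlinarith
  have ht0 : (0:ℝ) < (1+η)⁻¹ := by positivity
  have ht1 : ((1:ℝ)+η)⁻¹ ≤ 1 := by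
    rw [inv_le_one_iff₀]; right; linarith
  intro m
  induction m with
  | zero =>
    intro z
    show (if z = y then (1:ℝ) else 0) ≤ _
    split
    · next h => subst h; rw [SimpleGraph.dist_self]; norm_num
    · exact mul_nonneg (pow_nonneg hr0 _) (by positivity)
  | succ m ih =>
    intro z
    rw [pn_succ hp_zero]
    calc ∑ w ∈ G.neighborFinset z, p z w * pn p m w y
        ≤ ∑ w ∈ G.neighborFinset z,
            p z w * ((1 - η^2/2) ^ m * ((1+η)⁻¹) ^ G.dist w y) := by
          apply Finset.sum_le_sum
          intro w _
          exact mul_le_mul_of_nonneg_left (ih w) (hp_nn z w)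
      _ = (1 - η^2/2) ^ m *
            ∑ w ∈ G.neighborFinset z, p z w * ((1+η)⁻¹) ^ G.dist w y := by
          rw [Finset.mul_sum]; congr 1; ext w; ring
      _ ≤ (1 - η^2/2) ^ m * ((1 - η^2/2) * ((1+η)⁻¹) ^ G.dist z y) := by
          apply mul_le_mul_of_nonneg_left
            (step_bound hconn hacyc hp_pos hp_sum hη hηlt hHu y z)
          exact pow_nonneg hr0 m
      _ = (1 - η^2/2) ^ (m+1) * ((1+η)⁻¹) ^ G.dist z y := by ring

lemma pn_le_r_pow (hconn : G.Connected) (hacyc : G.IsAcyclic)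
    (hp_pos : ∀ x y, 0 < p x y ↔ G.Adj x y)
    (hp_zero : ∀ x y, ¬ G.Adj x y → p x y = 0)
    (hp_sum : ∀ x, ∑ y ∈ G.neighborFinset x, p x y = 1)
    (hη : 0 < η) (hηlt : η < 1/2)
    (hHu : ∀ x y, G.Adj x y → p x y ≤ 1 / 2 - η)
    (x y : S) (m : ℕ) : pn p m x y ≤ (1 - η^2/2) ^ m := by
  have h := pn_le_geom hconn hacyc hp_pos hp_zero hp_sum hη hηlt hHu y m x
  have ht1 : ((1+η)⁻¹ : ℝ) ^ G.dist x y ≤ 1 := by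
    apply pow_le_one₀ (by positivity)
    rw [inv_le_one_iff₀]; right; linarith
  have hr0 : (0:ℝ) ≤ 1 - η^2/2 := by nlinarith
  calc pn p m x y ≤ (1 - η^2/2) ^ m * ((1+η)⁻¹) ^ G.dist x y := h
    _ ≤ (1 - η^2/2) ^ m * 1 := by
        apply mul_le_mul_of_nonneg_left ht1 (pow_nonneg hr0 m)
    _ = (1 - η^2/2) ^ m := mul_one _

lemma summable_pn (hconn : G.Connected) (hacyc : G.IsAcyclic)
    (hp_pos : ∀ x y, 0 < p x y ↔ G.Adj x y)
    (hp_zero : ∀ x y, ¬ G.Adj x y → p x y = 0)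
    (hp_sum : ∀ x, ∑ y ∈ G.neighborFinset x, p x y = 1)
    (hη : 0 < η) (hηlt : η < 1/2)
    (hHu : ∀ x y, G.Adj x y → p x y ≤ 1 / 2 - η)
    (x y : S) : Summable (fun m => pn p m x y) := by
  have hp_nn : ∀ x y, 0 ≤ p x y := by
    intro a b
    by_cases h : G.Adj a b
    · exact ((hp_pos a b).mpr h).le
    · rw [hp_zero a b h]
  apply Summable.of_nonneg_of_le (fun m => pn_nonneg hp_nn hp_zero m x y)
    (pn_le_r_pow hconn hacyc hp_pos hp_zero hp_sum hη hηlt hHu x y)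
  apply summable_geometric_of_lt_one (by nlinarith) (by nlinarith)

end MKaux5

/-- First-passage probabilities. -/
def fp {S : Type*} (G : SimpleGraph S) [∀ x : S, Fintype (G.neighborSet x)]
    (p : S → S → ℝ) : ℕ → S → S → ℝ
  | 0, x, w => if x = w then 1 else 0
  | n + 1, x, w => if x = w then 0 else
      ∑ z ∈ G.neighborFinset x, p x z * fp G p n z w

namespace MKaux6
open MKaux MKaux2 MKaux3 MKaux4 MKaux5 SimpleGraph Finset

variable {S : Type*} {G : SimpleGraph S} [∀ x : S, Fintype (G.neighborSet x)]
variable {p : S → S → ℝ}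

lemma fp_nonneg (hp_nn : ∀ x y, 0 ≤ p x y) :
    ∀ (n : ℕ) (x w : S), 0 ≤ fp G p n x w := by
  intro n
  induction n with
  | zero => intro x w; show (0:ℝ) ≤ if x = w then 1 else 0; split <;> norm_num
  | succ m ih =>
    intro x w
    show (0:ℝ) ≤ if x = w then 0 else ∑ z ∈ G.neighborFinset x, p x z * fp G p m z w
    split
    · exact le_rfl
    · exact Finset.sum_nonneg fun z _ => mul_nonneg (hp_nn x z) (ih z w)

lemma fp_le_pn (hp_nn : ∀ x y, 0 ≤ p x y)
    (hp_zero : ∀ x y, ¬ G.Adj x y → p x y = 0) :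
    ∀ (n : ℕ) (x w : S), fp G p n x w ≤ pn p n x w := by
  intro n
  induction n with
  | zero => intro x w; exact le_refl _
  | succ m ih =>
    intro x w
    rw [pn_succ hp_zero]
    show (if x = w then 0 else ∑ z ∈ G.neighborFinset x, p x z * fp G p m z w) ≤ _
    split
    · exact Finset.sum_nonneg fun z _ => mul_nonneg (hp_nn x z)
        (pn_nonneg hp_nn hp_zero m z w)
    · exact Finset.sum_le_sum fun z _ =>
        mul_le_mul_of_nonneg_left (ih z w) (hp_nn x z)

/-- Walk decomposition at a separating vertex. -/
lemma pn_decomp (hp_zero : ∀ x y, ¬ G.Adj x y → p x y = 0)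
    {w y : S} : ∀ (m : ℕ) (x : S), (∀ W : G.Walk x y, w ∈ W.support) →
    pn p m x y = ∑ j ∈ Finset.range (m + 1), fp G p j x w * pn p (m - j) w y := by
  intro m
  induction m with
  | zero =>
    intro x hsep
    by_cases hxy : x = y
    · subst hxy
      have hw : w = x := by simpa using hsep Walk.nil
      subst hw
      simp only [Nat.zero_add, Finset.range_one, Finset.sum_singleton]
      show (if w = w then (1:ℝ) else 0) =
        (if w = w then (1:ℝ) else 0) * (if w = w then (1:ℝ) else 0)
      rw [if_pos rfl]; ring
    · simp only [Nat.zero_add, Finset.range_one, Finset.sum_singleton, Nat.sub_zero]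
      show (if x = y then (1:ℝ) else 0) =
        (if x = w then (1:ℝ) else 0) * (if w = y then (1:ℝ) else 0)
      rw [if_neg hxy]
      by_cases hxw : x = w
      · subst hxw
        rw [if_neg hxy, mul_zero]
      · rw [if_neg hxw, zero_mul]
  | succ m ih =>
    intro x hsep
    by_cases hxw : x = w
    · subst hxw
      rw [Finset.sum_eq_single_of_mem 0 (Finset.mem_range.mpr (by omega))]
      · show pn p (m+1) x y = fp G p 0 x x * pn p (m + 1 - 0) x y
        show pn p (m+1) x y = (if x = x then (1:ℝ) else 0) * pn p (m + 1) x y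
        rw [if_pos rfl, one_mul]
      · intro j _ hj
        obtain ⟨i, rfl⟩ := Nat.exists_eq_succ_of_ne_zero hj
        show (if x = x then (0:ℝ) else _) * pn p (m + 1 - (i+1)) x y = 0
        rw [if_pos rfl, zero_mul]
    · have hsep' : ∀ z, G.Adj x z → ∀ W : G.Walk z y, w ∈ W.support := by
        intro z hz W
        have := hsep (Walk.cons hz W)
        rw [Walk.support_cons] at this
        rcases List.mem_cons.mp this with h | h
        · exact absurd h.symm hxw
        · exact h
      rw [pn_succ hp_zero]
      have step1 : ∑ z ∈ G.neighborFinset x, p x z * pn p m z y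
          = ∑ z ∈ G.neighborFinset x, p x z *
              ∑ j ∈ Finset.range (m + 1), fp G p j z w * pn p (m - j) w y := by
        apply Finset.sum_congr rfl
        intro z hz
        rw [ih z (hsep' z ((G.mem_neighborFinset x z).mp hz))]
      rw [step1]
      have step2 : ∑ z ∈ G.neighborFinset x, p x z *
            ∑ j ∈ Finset.range (m + 1), fp G p j z w * pn p (m - j) w y
          = ∑ j ∈ Finset.range (m + 1),
              (∑ z ∈ G.neighborFinset x, p x z * fp G p j z w) * pn p (m - j) w y := by
        simp_rw [Finset.mul_sum]
        rw [Finset.sum_comm]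
        apply Finset.sum_congr rfl
        intro j _
        rw [Finset.sum_mul]
        apply Finset.sum_congr rfl
        intro z _
        ring
      rw [step2]
      have step3 : ∀ j, (∑ z ∈ G.neighborFinset x, p x z * fp G p j z w)
          = fp G p (j + 1) x w := by
        intro j
        show _ = if x = w then (0:ℝ) else ∑ z ∈ G.neighborFinset x, p x z * fp G p j z w
        rw [if_neg hxw]
      rw [Finset.sum_congr rfl (fun j _ => by rw [step3 j])]
      rw [Finset.sum_range_succ' (fun j => fp G p j x w * pn p (m + 1 - j) w y) (m+1)]
      have h0 : fp G p 0 x w * pn p (m + 1 - 0) w y = 0 := by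
        show (if x = w then (1:ℝ) else 0) * _ = 0
        rw [if_neg hxw, zero_mul]
      rw [h0, add_zero]
      apply Finset.sum_congr rfl
      intro j _
      rw [Nat.succ_sub_succ]

end MKaux6

namespace MKaux7
open MKaux MKaux2 MKaux3 MKaux4 MKaux5 MKaux6 SimpleGraph Finset

variable {S : Type*} {G : SimpleGraph S} [∀ x : S, Fintype (G.neighborSet x)]
variable {p : S → S → ℝ} {η : ℝ}

lemma green_decomp (hconn : G.Connected) (hacyc : G.IsAcyclic)
    (hp_pos : ∀ x y, 0 < p x y ↔ G.Adj x y)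
    (hp_zero : ∀ x y, ¬ G.Adj x y → p x y = 0)
    (hp_sum : ∀ x, ∑ y ∈ G.neighborFinset x, p x y = 1)
    (hη : 0 < η) (hηlt : η < 1/2)
    (hHu : ∀ x y, G.Adj x y → p x y ≤ 1 / 2 - η)
    {x w y : S} (hsep : ∀ W : G.Walk x y, w ∈ W.support) :
    green p x y = (∑' j, fp G p j x w) * green p w y := by
  have hp_nn : ∀ x y, 0 ≤ p x y := by
    intro a b
    by_cases h : G.Adj a b
    · exact ((hp_pos a b).mpr h).le
    · rw [hp_zero a b h]
  have hsumf : Summable (fun j => fp G p j x w) := by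
    apply Summable.of_nonneg_of_le (fun j => fp_nonneg hp_nn j x w)
      (fun j => (fp_le_pn hp_nn hp_zero j x w).trans
        (pn_le_r_pow hconn hacyc hp_pos hp_zero hp_sum hη hηlt hHu x w j))
    exact summable_geometric_of_lt_one (by nlinarith) (by nlinarith)
  have hsumpn : Summable (fun m => pn p m w y) :=
    summable_pn hconn hacyc hp_pos hp_zero hp_sum hη hηlt hHu w y
  have h1 : green p x y = ∑' m, ∑ j ∈ Finset.range (m + 1),
      fp G p j x w * pn p (m - j) w y :=
    tsum_congr fun m => pn_decomp hp_zero m x hsep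
  have h2 := tsum_mul_tsum_eq_tsum_sum_range_of_summable_norm
    (f := fun j => fp G p j x w) (g := fun m => pn p m w y)
    (by simpa [Real.norm_eq_abs] using hsumf.abs)
    (by simpa [Real.norm_eq_abs] using hsumpn.abs)
  exact h1.trans h2.symm

lemma green_pos (hconn : G.Connected) (hacyc : G.IsAcyclic)
    (hp_pos : ∀ x y, 0 < p x y ↔ G.Adj x y)
    (hp_zero : ∀ x y, ¬ G.Adj x y → p x y = 0)
    (hp_sum : ∀ x, ∑ y ∈ G.neighborFinset x, p x y = 1)
    (hη : 0 < η) (hηlt : η < 1/2)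
    (hHu : ∀ x y, G.Adj x y → p x y ≤ 1 / 2 - η)
    (x y : S) : 0 < green p x y := by
  have hp_nn : ∀ x y, 0 ≤ p x y := by
    intro a b
    by_cases h : G.Adj a b
    · exact ((hp_pos a b).mpr h).le
    · rw [hp_zero a b h]
  obtain ⟨W⟩ := hconn.preconnected x y
  have h1 : 0 < pn p W.length x y := pn_pos_of_walk hp_pos hp_zero W
  have h2 : pn p W.length x y ≤ green p x y :=
    Summable.le_tsum (summable_pn hconn hacyc hp_pos hp_zero hp_sum hη hηlt hHu x y)
      W.length (fun j _ => pn_nonneg hp_nn hp_zero j x y)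
  linarith

end MKaux7

open MKaux MKaux2 MKaux3 MKaux4 MKaux5 MKaux6 MKaux7 in
/-- Under hypothesis (H), for a geodesic ray `γ` from `o`
with projection `π(x) = γ (k x)`: for every `n ≥ k x`,
`G(x,γ n) ⬝ G(o, γ (k x)) = G(o, γ n) ⬝ G(x, γ (k x))`; consequently the Martin
kernel `K(x) = lim_n G(x,γ n)/G(o,γ n)` exists and equals
`G(x,π(x))/G(o,π(x))`. -/
theorem martin_kernel_exists
    {S : Type*} [Countable S] (G : SimpleGraph S)
    [∀ x : S, Fintype (G.neighborSet x)]
    (hconn : G.Connected) (hacyc : G.IsAcyclic)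
    (p : S → S → ℝ)
    (hp_pos : ∀ x y, 0 < p x y ↔ G.Adj x y)
    (hp_zero : ∀ x y, ¬ G.Adj x y → p x y = 0)
    (hp_sum : ∀ x, ∑ y ∈ G.neighborFinset x, p x y = 1)
    (ε η : ℝ) (hε : 0 < ε) (hη : 0 < η)
    (hH : ∀ x y, G.Adj x y → ε ≤ p x y ∧ p x y ≤ 1 / 2 - η)
    (o : S) (γ : ℕ → S) (hγ0 : γ 0 = o)
    (hγ : ∀ m n : ℕ, (G.dist (γ m) (γ n) : ℤ) = |(m : ℤ) - (n : ℤ)|)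
    (k : S → ℕ)
    (hk_min : ∀ (x : S) (n : ℕ), G.dist x (γ (k x)) ≤ G.dist x (γ n))
    (hk_uniq : ∀ (x : S) (n : ℕ), G.dist x (γ n) ≤ G.dist x (γ (k x)) → n = k x) :
    ∀ x : S,
      (∀ n : ℕ, k x ≤ n →
        green p x (γ n) * green p o (γ (k x)) =
          green p o (γ n) * green p x (γ (k x))) ∧
      Tendsto (fun n => green p x (γ n) / green p o (γ n)) atTop
        (𝓝 (green p x (γ (k x)) / green p o (γ (k x)))) := by
  classical
  have hHu : ∀ x y, G.Adj x y → p x y ≤ 1 / 2 - η := fun x y h => (hH x y h).2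
  -- η < 1/2
  have hηlt : η < 1 / 2 := by
    have hne : (G.neighborFinset o).Nonempty := by
      rcases Finset.eq_empty_or_nonempty (G.neighborFinset o) with h | h
      · exfalso; have := hp_sum o; rw [h, Finset.sum_empty] at this; norm_num at this
      · exact h
    obtain ⟨y0, hy0⟩ := hne
    have hadj := (G.mem_neighborFinset o y0).mp hy0
    have h1 := (hp_pos o y0).mpr hadj
    have h2 := hHu o y0 hadj
    linarith
  -- adjacency along the ray
  have hd1 : ∀ n : ℕ, G.dist (γ n) (γ (n + 1)) = 1 := by
    intro n
    have := hγ n (n + 1)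
    have h2 : |(n : ℤ) - (n + 1 : ℕ)| = 1 := by push_cast; simp
    rw [h2] at this
    exact_mod_cast this
  have hadjγ : ∀ n : ℕ, G.Adj (γ n) (γ (n + 1)) :=
    fun n => SimpleGraph.dist_eq_one_iff_adj.mp (hd1 n)
  have hinj : Function.Injective γ := by
    intro a b hab
    have := hγ a b
    rw [hab, SimpleGraph.dist_self] at this
    simp only [Nat.cast_zero] at this
    have h2 := abs_eq_zero.mp this.symm
    omega
  intro x
  -- the distance identity at the projection for x
  have hdx : G.dist x (γ (k x + 1)) = G.dist x (γ (k x)) + 1 := by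
    have h1 := hk_min x (k x + 1)
    have h2 : ¬ G.dist x (γ (k x + 1)) ≤ G.dist x (γ (k x)) := by
      intro h
      have := hk_uniq x (k x + 1) h
      omega
    have h3 : G.dist x (γ (k x + 1)) ≤ G.dist x (γ (k x)) + G.dist (γ (k x)) (γ (k x + 1)) :=
      hconn.dist_triangle
    rw [hd1 (k x)] at h3
    omega
  -- distance identity for o = γ 0
  have hdo : G.dist (γ 0) (γ (k x + 1)) = G.dist (γ 0) (γ (k x)) + 1 := by
    have h1 : (G.dist (γ 0) (γ (k x)) : ℤ) = (k x : ℤ) := by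
      simpa using hγ 0 (k x)
    have h2 : (G.dist (γ 0) (γ (k x + 1)) : ℤ) = (k x : ℤ) + 1 := by
      have := hγ 0 (k x + 1)
      simp only [Nat.cast_zero, zero_sub, abs_neg, Nat.abs_cast] at this
      push_cast at this ⊢
      omega
    omega
  have sepx : ∀ n, k x ≤ n → ∀ W : G.Walk x (γ n), γ (k x) ∈ W.support :=
    sep_ray hconn hacyc γ hadjγ hinj hdx
  have sepo : ∀ n, k x ≤ n → ∀ W : G.Walk o (γ n), γ (k x) ∈ W.support := by
    rw [← hγ0]
    exact sep_ray hconn hacyc γ hadjγ hinj hdo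
  have GD : ∀ (a b : S), (∀ W : G.Walk a b, γ (k x) ∈ W.support) →
      green p a b = (∑' j, fp G p j a (γ (k x))) * green p (γ (k x)) b :=
    fun a b h => green_decomp hconn hacyc hp_pos hp_zero hp_sum hη hηlt hHu h
  have GP : ∀ (a b : S), 0 < green p a b :=
    green_pos hconn hacyc hp_pos hp_zero hp_sum hη hηlt hHu
  have A2 : green p x (γ (k x)) = (∑' j, fp G p j x (γ (k x))) * green p (γ (k x)) (γ (k x)) :=
    GD x (γ (k x)) (fun W => W.end_mem_support)
  have B2 : green p o (γ (k x)) = (∑' j, fp G p j o (γ (k x))) * green p (γ (k x)) (γ (k x)) :=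
    GD o (γ (k x)) (fun W => W.end_mem_support)
  have key : ∀ n : ℕ, k x ≤ n →
      green p x (γ n) * green p o (γ (k x)) = green p o (γ n) * green p x (γ (k x)) := by
    intro n hn
    have A1 : green p x (γ n) = (∑' j, fp G p j x (γ (k x))) * green p (γ (k x)) (γ n) :=
      GD x (γ n) (sepx n hn)
    have B1 : green p o (γ n) = (∑' j, fp G p j o (γ (k x))) * green p (γ (k x)) (γ n) :=
      GD o (γ n) (sepo n hn)
    rw [A1, B1, A2, B2]
    ring
  refine ⟨key, ?_⟩
  have heq : ∀ n, k x ≤ n →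
      green p x (γ n) / green p o (γ n) = green p x (γ (k x)) / green p o (γ (k x)) := by
    intro n hn
    rw [div_eq_div_iff (GP o (γ n)).ne' (GP o (γ (k x))).ne']
    have := key n hn
    linarith
  refine Filter.Tendsto.congr' ?_ (tendsto_const_nhds
    (x := green p x (γ (k x)) / green p o (γ (k x))) (f := (Filter.atTop : Filter ℕ)))
  filter_upwards [Filter.eventually_ge_atTop (k x)] with n hn
  exact (heq n hn).symm

end
end

section
/- Under hypothesis (H), the Martin kernel K along a geodesic ray γ from o, defined by K(x) = G(x,π(x))/G(o,π(x)), is a positive harmonic function with K(o) = 1: K(x) > 0 and ∑_{y ∼ x} p(x,y) K(y) = K(x) for all x ∈ S. -/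
set_option linter.unusedSectionVars false
set_option maxHeartbeats 1000000

open scoped Classical

noncomputable section

namespace MKaux
open SimpleGraph Finset

variable {S : Type*}

section Tree
variable {G : SimpleGraph S} (hconn : G.Connected) (hacyc : G.IsAcyclic)
include hconn hacyc

lemma path_len {x y : S} (q : G.Walk x y) (hq : q.IsPath) : q.length = G.dist x y := by
  obtain ⟨r, hr, hrl⟩ := hconn.exists_path_of_dist x y
  have h2 : q = r := by simpa using hacyc.path_unique ⟨q, hq⟩ ⟨r, hr⟩
  rw [h2, hrl]

omit hconn hacyc in
lemma support_pair {u v : S} (q : G.Walk u v) (h : q.length = 1) : q.support = [u, v] := by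
  cases q with
  | nil => simp at h
  | cons h' r =>
    cases r with
    | nil => simp
    | cons h'' r' => simp [Walk.length_cons] at h

lemma step_dist {x z w : S} (h : G.Adj x z) :
    G.dist z w + 1 = G.dist x w ∨ G.dist z w = G.dist x w + 1 := by
  obtain ⟨q, hq, hql⟩ := hconn.exists_path_of_dist z w
  by_cases hx : x ∈ q.support
  · right
    have h1 := hq.takeUntil hx
    have h2 := hq.dropUntil hx
    have hlen : (q.takeUntil x hx).length + (q.dropUntil x hx).length = q.length := by
      rw [← Walk.length_append, q.take_spec hx]
    have l1 : (q.takeUntil x hx).length = G.dist z x := path_len hconn hacyc _ h1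
    have l2 : (q.dropUntil x hx).length = G.dist x w := path_len hconn hacyc _ h2
    have hzx : G.dist z x = 1 := dist_eq_one_iff_adj.mpr h.symm
    omega
  · left
    have hp : (Walk.cons h q).IsPath := hq.cons hx
    have hl := path_len hconn hacyc _ hp
    rw [Walk.length_cons, hql] at hl
    omega

lemma step_closer_path {x z w : S} (h : G.Adj x z) (hd : G.dist z w + 1 = G.dist x w) :
    ∃ (q : G.Walk x w), q.IsPath ∧ q.getVert 1 = z := by
  obtain ⟨q, hq, hql⟩ := hconn.exists_path_of_dist z w
  by_cases hx : x ∈ q.support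
  · exfalso
    have h1 := hq.takeUntil hx
    have h2 := hq.dropUntil hx
    have hlen : (q.takeUntil x hx).length + (q.dropUntil x hx).length = q.length := by
      rw [← Walk.length_append, q.take_spec hx]
    have l1 : (q.takeUntil x hx).length = G.dist z x := path_len hconn hacyc _ h1
    have l2 : (q.dropUntil x hx).length = G.dist x w := path_len hconn hacyc _ h2
    have hzx : G.dist z x = 1 := dist_eq_one_iff_adj.mpr h.symm
    omega
  · exact ⟨Walk.cons h q, hq.cons hx, by simp [Walk.getVert_cons_succ]⟩

lemma step_unique {x z₁ z₂ w : S} (h₁ : G.Adj x z₁) (h₂ : G.Adj x z₂)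
    (d₁ : G.dist z₁ w + 1 = G.dist x w) (d₂ : G.dist z₂ w + 1 = G.dist x w) : z₁ = z₂ := by
  obtain ⟨q₁, hq₁, hv₁⟩ := step_closer_path hconn hacyc h₁ d₁
  obtain ⟨q₂, hq₂, hv₂⟩ := step_closer_path hconn hacyc h₂ d₂
  have : q₁ = q₂ := by simpa using hacyc.path_unique ⟨q₁, hq₁⟩ ⟨q₂, hq₂⟩
  rw [← hv₁, ← hv₂, this]

lemma step_exists {x w : S} (h : G.dist x w ≠ 0) :
    ∃ z, G.Adj x z ∧ G.dist z w + 1 = G.dist x w := by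
  obtain ⟨q, hq, hql⟩ := hconn.exists_path_of_dist x w
  cases q with
  | nil => simp at hql h
  | cons h' q' =>
    refine ⟨_, h', ?_⟩
    have := path_len hconn hacyc q' hq.of_cons
    rw [Walk.length_cons] at hql
    omega

lemma sep_of_mem {x a w : S} (q : G.Walk x w) (hq : q.IsPath) (ha : a ∈ q.support) :
    G.dist x a + G.dist a w = G.dist x w := by
  have h1 := hq.takeUntil ha
  have h2 := hq.dropUntil ha
  have hlen : (q.takeUntil a ha).length + (q.dropUntil a ha).length = q.length := by
    rw [← Walk.length_append, q.take_spec ha]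
  have l1 := path_len hconn hacyc _ h1
  have l2 := path_len hconn hacyc _ h2
  have l3 := path_len hconn hacyc _ hq
  omega

lemma mem_of_sep {x a w : S} (q : G.Walk x w) (hq : q.IsPath)
    (hsep : G.dist x a + G.dist a w = G.dist x w) : a ∈ q.support := by
  obtain ⟨q1, h1, l1⟩ := hconn.exists_path_of_dist x a
  obtain ⟨q2, h2, l2⟩ := hconn.exists_path_of_dist a w
  have hW : (q1.append q2).length = G.dist x w := by rw [Walk.length_append]; omega
  have hWp : (q1.append q2).IsPath := Walk.isPath_of_length_eq_dist _ hW
  have he : q1.append q2 = q := by simpa using hacyc.path_unique ⟨_, hWp⟩ ⟨q, hq⟩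
  rw [← he, Walk.mem_support_append_iff]
  exact Or.inr q2.start_mem_support

lemma sep_step {x z a w : S} (hsep : G.dist x a + G.dist a w = G.dist x w)
    (hxa : x ≠ a) (hz : G.Adj x z) (hza : z ≠ a) :
    G.dist z a + G.dist a w = G.dist z w := by
  obtain ⟨q, hq, hql⟩ := hconn.exists_path_of_dist x w
  have ha : a ∈ q.support := mem_of_sep hconn hacyc q hq hsep
  by_cases hzs : z ∈ q.support
  · have hd2 := hq.dropUntil hzs
    by_cases ha2 : a ∈ (q.dropUntil z hzs).support
    · exact sep_of_mem hconn hacyc _ hd2 ha2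
    · exfalso
      have ha1 : a ∈ (q.takeUntil z hzs).support := by
        have := q.take_spec hzs
        rw [← this, Walk.mem_support_append_iff] at ha
        tauto
      have hd1 := hq.takeUntil hzs
      have l1 : (q.takeUntil z hzs).length = G.dist x z := path_len hconn hacyc _ hd1
      have hxz : G.dist x z = 1 := dist_eq_one_iff_adj.mpr hz
      have := support_pair (q.takeUntil z hzs) (l1.trans hxz)
      rw [this] at ha1
      simp at ha1
      tauto
  · have hp : (Walk.cons hz.symm q).IsPath := hq.cons hzs
    have ha' : a ∈ (Walk.cons hz.symm q).support := by
      rw [Walk.support_cons]; exact List.mem_cons_of_mem _ ha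
    exact sep_of_mem hconn hacyc _ hp ha'

end Tree
section Prob
variable {G : SimpleGraph S} [inst : ∀ x : S, Fintype (G.neighborSet x)]
  {p : S → S → ℝ}
  (hconn : G.Connected) (hacyc : G.IsAcyclic)
  (hp_nonneg : ∀ x y, 0 ≤ p x y)
  (hp_zero : ∀ x y, ¬ G.Adj x y → p x y = 0)
  (hp_sum : ∀ x, ∑ y ∈ G.neighborFinset x, p x y = 1)
  {ε η : ℝ} (hε : 0 < ε) (hη : 0 < η) (hηhalf : η < 1/2)
  (hH : ∀ x y, G.Adj x y → ε ≤ p x y ∧ p x y ≤ 1 / 2 - η)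

omit inst in
include hp_nonneg in
lemma pn_nonneg : ∀ (n : ℕ) (x y : S), 0 ≤ pn p n x y := by
  intro n
  induction n with
  | zero => intro x y; simp only [pn]; split <;> norm_num
  | succ n ih =>
    intro x y
    simp only [pn]
    exact tsum_nonneg fun z => mul_nonneg (hp_nonneg x z) (ih z y)

include hp_zero in
lemma pn_succ (n : ℕ) (x y : S) :
    pn p (n+1) x y = ∑ z ∈ G.neighborFinset x, p x z * pn p n z y := by
  simp only [pn]
  refine tsum_eq_sum ?_
  intro b hb
  rw [hp_zero x b (by simpa using hb)]
  ring

include hconn hacyc hp_nonneg hp_zero hp_sum hε hη hηhalf hH in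
lemma pn_le : ∀ (n : ℕ) (x y : S),
    pn p n x y ≤ (1-2*η)^(G.dist x y) * (1-2*η^2)^n := by
  have hlam0 : (0:ℝ) < 1-2*η := by linarith
  have hlam1 : (1:ℝ)-2*η < 1 := by linarith
  have hrho0 : (0:ℝ) < 1-2*η^2 := by nlinarith
  have hrho1 : (1:ℝ)-2*η^2 < 1 := by nlinarith
  intro n
  induction n with
  | zero =>
    intro x y
    simp only [pn, pow_zero, mul_one]
    split
    · next h => subst h; rw [SimpleGraph.dist_self, pow_zero]
    · positivity
  | succ n ih =>
    intro x y
    rw [pn_succ hp_zero]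
    have hbound : ∀ z ∈ G.neighborFinset x,
        p x z * pn p n z y ≤ p x z * ((1-2*η)^(G.dist z y) * (1-2*η^2)^n) :=
      fun z _ => mul_le_mul_of_nonneg_left (ih z y) (hp_nonneg x z)
    rcases Nat.eq_zero_or_pos (G.dist x y) with hd | hd
    · -- x = y
      have hxy : x = y := hconn.dist_eq_zero_iff.mp hd
      subst hxy
      have hzy : ∀ z ∈ G.neighborFinset x, G.dist z x = 1 := by
        intro z hz
        have hadj : G.Adj x z := by simpa using hz
        rcases step_dist hconn hacyc (w := x) hadj with h | h
        · omega
        · rw [h, hd]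
      calc ∑ z ∈ G.neighborFinset x, p x z * pn p n z x
          ≤ ∑ z ∈ G.neighborFinset x, p x z * ((1-2*η) * (1-2*η^2)^n) := by
            refine Finset.sum_le_sum ?_
            intro z hz
            have := hbound z hz
            rwa [hzy z hz, pow_one] at this
        _ = (1-2*η) * (1-2*η^2)^n := by rw [← Finset.sum_mul, hp_sum x, one_mul]
        _ ≤ (1-2*η)^(G.dist x x) * (1-2*η^2)^(n+1) := by
            rw [SimpleGraph.dist_self, pow_zero, one_mul, pow_succ (1-2*η^2) n,
              mul_comm ((1-2*η^2)^n) (1-2*η^2)]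
            exact mul_le_mul_of_nonneg_right (by nlinarith) (pow_nonneg hrho0.le n)
    · -- dist x y = d'+1
      obtain ⟨z₀, hz₀a, hz₀d⟩ := step_exists hconn hacyc (by omega : G.dist x y ≠ 0)
      have hz₀m : z₀ ∈ G.neighborFinset x := by simpa using hz₀a
      set d : ℕ := G.dist x y with hdd
      obtain ⟨d', hd'⟩ : ∃ d', d = d' + 1 := ⟨d - 1, by omega⟩
      have hfar : ∀ z ∈ (G.neighborFinset x).erase z₀, G.dist z y = d + 1 := by
        intro z hz
        obtain ⟨hzne, hzm⟩ := Finset.mem_erase.mp hz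
        have hadj : G.Adj x z := by simpa using hzm
        rcases step_dist hconn hacyc (w := y) hadj with h | h
        · exact absurd (step_unique hconn hacyc hadj hz₀a h hz₀d) hzne
        · exact h
      rw [← Finset.add_sum_erase _ _ hz₀m]
      have herase : ∑ z ∈ (G.neighborFinset x).erase z₀, p x z * pn p n z y
          ≤ (1 - p x z₀) * ((1-2*η)^(d+1) * (1-2*η^2)^n) := by
        have hsum' : ∑ z ∈ (G.neighborFinset x).erase z₀, p x z = 1 - p x z₀ := by
          have := Finset.add_sum_erase _ (fun z => p x z) hz₀m
          rw [hp_sum x] at this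
          linarith
        rw [← hsum', Finset.sum_mul]
        refine Finset.sum_le_sum ?_
        intro z hz
        have h1 := hbound z (Finset.mem_of_mem_erase hz)
        rwa [hfar z hz] at h1
      have hclose : p x z₀ * pn p n z₀ y ≤ p x z₀ * ((1-2*η)^d' * (1-2*η^2)^n) := by
        have := hbound z₀ hz₀m
        have hdz : G.dist z₀ y = d' := by omega
        rwa [hdz] at this
      have halg : p x z₀ * ((1-2*η)^d' * (1-2*η^2)^n)
          + (1 - p x z₀) * ((1-2*η)^(d+1) * (1-2*η^2)^n)
          ≤ (1-2*η)^d * (1-2*η^2)^(n+1) := by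
        set t := p x z₀ with ht
        have htl : ε ≤ t := (hH x z₀ hz₀a).1
        have htu : t ≤ 1/2 - η := (hH x z₀ hz₀a).2
        have hL : (0:ℝ) ≤ (1-2*η)^d' := by positivity
        have hR : (0:ℝ) ≤ (1-2*η^2)^n := by positivity
        have key : t * 1 + (1-t) * ((1-2*η)*(1-2*η)) ≤ (1-2*η) * (1-2*η^2) := by
          nlinarith [mul_nonneg (sub_nonneg.2 htu)
            (sub_nonneg.2 (by nlinarith : (1-2*η)*(1-2*η) ≤ 1))]
        have key2 : (t * 1 + (1-t) * ((1-2*η)*(1-2*η))) * ((1-2*η)^d' * (1-2*η^2)^n)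
            ≤ ((1-2*η) * (1-2*η^2)) * ((1-2*η)^d' * (1-2*η^2)^n) :=
          mul_le_mul_of_nonneg_right key (mul_nonneg hL hR)
        calc t * ((1-2*η)^d' * (1-2*η^2)^n)
            + (1 - t) * ((1-2*η)^(d+1) * (1-2*η^2)^n)
            = (t * 1 + (1-t) * ((1-2*η)*(1-2*η))) * ((1-2*η)^d' * (1-2*η^2)^n) := by
              rw [hd']; ring
          _ ≤ ((1-2*η) * (1-2*η^2)) * ((1-2*η)^d' * (1-2*η^2)^n) := key2
          _ = (1-2*η)^d * (1-2*η^2)^(n+1) := by rw [hd']; ring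
      calc p x z₀ * pn p n z₀ y + ∑ z ∈ (G.neighborFinset x).erase z₀, p x z * pn p n z y
          ≤ p x z₀ * ((1-2*η)^d' * (1-2*η^2)^n)
            + (1 - p x z₀) * ((1-2*η)^(d+1) * (1-2*η^2)^n) := add_le_add hclose herase
        _ ≤ (1-2*η)^d * (1-2*η^2)^(n+1) := halg

include hconn hacyc hp_nonneg hp_zero hp_sum hε hη hηhalf hH in
lemma summable_pn (x y : S) : Summable (fun n => pn p n x y) := by
  have hrho0 : (0:ℝ) ≤ 1-2*η^2 := by nlinarith
  have hrho1 : (1:ℝ)-2*η^2 < 1 := by nlinarith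
  refine Summable.of_nonneg_of_le (fun n => pn_nonneg hp_nonneg n x y)
    (fun n => pn_le hconn hacyc hp_nonneg hp_zero hp_sum hε hη hηhalf hH n x y) ?_
  exact (summable_geometric_of_lt_one hrho0 hrho1).mul_left _

include hconn hacyc hp_nonneg hp_zero hε hH in
lemma pn_dist_ge : ∀ (d : ℕ) (x y : S), G.dist x y = d → ε ^ d ≤ pn p d x y := by
  intro d
  induction d with
  | zero =>
    intro x y hd
    have : x = y := hconn.dist_eq_zero_iff.mp hd
    subst this
    simp [pn]
  | succ d ih =>
    intro x y hd
    obtain ⟨z, hza, hzd⟩ := step_exists hconn hacyc (by omega : G.dist x y ≠ 0)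
    rw [pn_succ hp_zero]
    have hzm : z ∈ G.neighborFinset x := by simpa using hza
    have h1 : ε ^ (d+1) ≤ p x z * pn p d z y := by
      rw [pow_succ, mul_comm (ε^d) ε]
      exact mul_le_mul (hH x z hza).1 (ih z y (by omega)) (by positivity) (hp_nonneg x z)
    refine h1.trans ?_
    refine Finset.single_le_sum (fun i _ => mul_nonneg (hp_nonneg x i)
      (pn_nonneg hp_nonneg d i y)) hzm

include hconn hacyc hp_nonneg hp_zero hp_sum hε hη hηhalf hH in
lemma green_pos (x y : S) : 0 < green p x y := by
  have h1 : ε ^ (G.dist x y) ≤ pn p (G.dist x y) x y :=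
    pn_dist_ge hconn hacyc hp_nonneg hp_zero hε hH _ x y rfl
  have h2 : pn p (G.dist x y) x y ≤ green p x y := by
    refine Summable.le_tsum (summable_pn hconn hacyc hp_nonneg hp_zero hp_sum hε hη hηhalf hH x y)
      _ (fun j _ => pn_nonneg hp_nonneg j x y)
  calc (0:ℝ) < ε ^ (G.dist x y) := by positivity
    _ ≤ green p x y := h1.trans h2

include hconn hacyc hp_nonneg hp_zero hp_sum hε hη hηhalf hH in
lemma green_step {x w : S} (hx : x ≠ w) :
    green p x w = ∑ z ∈ G.neighborFinset x, p x z * green p z w := by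
  have hsum := summable_pn hconn hacyc hp_nonneg hp_zero hp_sum hε hη hηhalf hH x w
  have h0 : green p x w = pn p 0 x w + ∑' n, pn p (n+1) x w := Summable.tsum_eq_zero_add hsum
  rw [h0]
  have hz : pn p 0 x w = 0 := by simp [pn, hx]
  rw [hz, zero_add]
  have h1 : ∀ n : ℕ, pn p (n+1) x w = ∑ z ∈ G.neighborFinset x, p x z * pn p n z w :=
    fun n => pn_succ hp_zero n x w
  rw [tsum_congr h1, Summable.tsum_finsetSum (fun z _ =>
    (summable_pn hconn hacyc hp_nonneg hp_zero hp_sum hε hη hηhalf hH z w).mul_left _)]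
  refine Finset.sum_congr rfl (fun z _ => tsum_mul_left)

end Prob



section FH
variable {S : Type*}

def fh (G : SimpleGraph S) [∀ x : S, Fintype (G.neighborSet x)]
    (p : S → S → ℝ) (a : S) : ℕ → S → ℝ
  | 0, x => if x = a then 1 else 0
  | n+1, x => if x = a then 0 else ∑ z ∈ G.neighborFinset x, p x z * fh G p a n z

variable {G : SimpleGraph S} [inst : ∀ x : S, Fintype (G.neighborSet x)]
  {p : S → S → ℝ}
  (hconn : G.Connected) (hacyc : G.IsAcyclic)
  (hp_nonneg : ∀ x y, 0 ≤ p x y)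
  (hp_zero : ∀ x y, ¬ G.Adj x y → p x y = 0)
  (hp_sum : ∀ x, ∑ y ∈ G.neighborFinset x, p x y = 1)
  {ε η : ℝ} (hε : 0 < ε) (hη : 0 < η) (hηhalf : η < 1/2)
  (hH : ∀ x y, G.Adj x y → ε ≤ p x y ∧ p x y ≤ 1 / 2 - η)

include hp_nonneg in
lemma fh_nonneg (a : S) : ∀ (n : ℕ) (x : S), 0 ≤ fh G p a n x := by
  intro n
  induction n with
  | zero => intro x; simp only [fh]; split <;> norm_num
  | succ n ih =>
    intro x
    simp only [fh]
    split
    · exact le_rfl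
    · exact Finset.sum_nonneg fun z _ => mul_nonneg (hp_nonneg x z) (ih z)

include hp_nonneg hp_zero in
lemma fh_le_pn (a : S) : ∀ (n : ℕ) (x : S), fh G p a n x ≤ pn p n x a := by
  intro n
  induction n with
  | zero => intro x; simp only [fh, pn]; exact le_rfl
  | succ n ih =>
    intro x
    by_cases hxa : x = a
    · simp only [fh, if_pos hxa]
      exact pn_nonneg hp_nonneg (n+1) x a
    · simp only [fh, if_neg hxa]
      rw [pn_succ hp_zero]
      exact Finset.sum_le_sum fun z _ =>
        mul_le_mul_of_nonneg_left (ih z) (hp_nonneg x z)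

include hconn hacyc hp_nonneg hp_zero hp_sum hε hη hηhalf hH in
lemma summable_fh (a x : S) : Summable (fun n => fh G p a n x) :=
  Summable.of_nonneg_of_le (fun n => fh_nonneg hp_nonneg a n x)
    (fun n => fh_le_pn hp_nonneg hp_zero a n x)
    (summable_pn hconn hacyc hp_nonneg hp_zero hp_sum hε hη hηhalf hH x a)

lemma fh_at_a (a : S) (n : ℕ) : fh G p a n a = if n = 0 then 1 else 0 := by
  cases n <;> simp [fh]

include hconn hacyc hp_nonneg hε hH in
lemma fh_dist_ge (a : S) : ∀ (d : ℕ) (x : S), G.dist x a = d → ε ^ d ≤ fh G p a d x := by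
  intro d
  induction d with
  | zero =>
    intro x hd
    have : x = a := hconn.dist_eq_zero_iff.mp hd
    subst this
    simp [fh]
  | succ d ih =>
    intro x hd
    have hxa : x ≠ a := by
      intro h; subst h; rw [SimpleGraph.dist_self] at hd; omega
    obtain ⟨z, hza, hzd⟩ := step_exists hconn hacyc (by omega : G.dist x a ≠ 0)
    have hzm : z ∈ G.neighborFinset x := by simpa using hza
    simp only [fh, if_neg hxa]
    have h1 : ε ^ (d+1) ≤ p x z * fh G p a d z := by
      rw [pow_succ, mul_comm (ε^d) ε]
      exact mul_le_mul (hH x z hza).1 (ih z (by omega)) (by positivity) (hp_nonneg x z)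
    refine h1.trans ?_
    exact Finset.single_le_sum (fun i _ => mul_nonneg (hp_nonneg x i)
      (fh_nonneg hp_nonneg a d i)) hzm

include hconn hacyc hp_nonneg hp_zero hp_sum hε hη hηhalf hH in
lemma fh_tsum_pos (a x : S) : 0 < ∑' n, fh G p a n x := by
  have h1 : ε ^ (G.dist x a) ≤ fh G p a (G.dist x a) x :=
    fh_dist_ge hconn hacyc hp_nonneg hε hH a _ x rfl
  have h2 : fh G p a (G.dist x a) x ≤ ∑' n, fh G p a n x :=
    Summable.le_tsum (summable_fh hconn hacyc hp_nonneg hp_zero hp_sum hε hη hηhalf hH a x) _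
      (fun j _ => fh_nonneg hp_nonneg a j x)
  calc (0:ℝ) < ε ^ (G.dist x a) := by positivity
    _ ≤ ∑' n, fh G p a n x := h1.trans h2

include hconn hacyc hp_nonneg hp_zero in
lemma conv_fh {a w : S} : ∀ (n : ℕ) (x : S),
    G.dist x a + G.dist a w = G.dist x w →
    pn p n x w = ∑ m ∈ Finset.range (n+1), fh G p a m x * pn p (n-m) a w := by
  intro n
  induction n with
  | zero =>
    intro x hsep
    simp only [zero_add, Finset.range_one, Finset.sum_singleton, Nat.sub_zero]
    by_cases hxw : x = w
    · subst hxw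
      have hxa : x = a := by
        have h0 : G.dist x a = 0 := by
          have := SimpleGraph.dist_self (G := G) (v := x)
          omega
        exact hconn.dist_eq_zero_iff.mp h0
      subst hxa
      simp [pn, fh]
    · by_cases hxa : x = a
      · subst hxa
        have haw : x ≠ w := hxw
        simp [pn, fh, hxw]
      · simp only [pn, fh, if_neg hxw, if_neg hxa, zero_mul]
  | succ n ih =>
    intro x hsep
    by_cases hxa : x = a
    · subst hxa
      rw [Finset.sum_eq_single_of_mem 0 (by simp)]
      · simp [fh]
      · intro m _ hm0
        rw [fh_at_a, if_neg hm0, zero_mul]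
    · rw [pn_succ hp_zero]
      have hz : ∀ z ∈ G.neighborFinset x, pn p n z w
          = ∑ m ∈ Finset.range (n+1), fh G p a m z * pn p (n-m) a w := by
        intro z hzm
        have hadj : G.Adj x z := by simpa using hzm
        by_cases hza : z = a
        · subst hza
          exact ih z (by simp [SimpleGraph.dist_self])
        · exact ih z (sep_step hconn hacyc hsep hxa hadj hza)
      calc ∑ z ∈ G.neighborFinset x, p x z * pn p n z w
          = ∑ z ∈ G.neighborFinset x, ∑ m ∈ Finset.range (n+1),
              p x z * (fh G p a m z * pn p (n-m) a w) := by
            refine Finset.sum_congr rfl fun z hzm => ?_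
            rw [hz z hzm, Finset.mul_sum]
        _ = ∑ m ∈ Finset.range (n+1),
              (∑ z ∈ G.neighborFinset x, p x z * fh G p a m z) * pn p (n-m) a w := by
            rw [Finset.sum_comm]
            refine Finset.sum_congr rfl fun m _ => ?_
            rw [Finset.sum_mul]
            exact Finset.sum_congr rfl fun z _ => by ring
        _ = ∑ m ∈ Finset.range (n+1), fh G p a (m+1) x * pn p (n+1-(m+1)) a w := by
            refine Finset.sum_congr rfl fun m _ => ?_
            have hf : fh G p a (m+1) x = ∑ z ∈ G.neighborFinset x, p x z * fh G p a m z := by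
              simp [fh, hxa]
            rw [hf, Nat.succ_sub_succ]
        _ = ∑ m ∈ Finset.range (n+1+1), fh G p a m x * pn p (n+1-m) a w := by
            rw [Finset.sum_range_succ' (fun m => fh G p a m x * pn p (n+1-m) a w) (n+1)]
            simp [fh, hxa]

include hconn hacyc hp_nonneg hp_zero hp_sum hε hη hηhalf hH in
lemma green_factor {a w x : S} (hsep : G.dist x a + G.dist a w = G.dist x w) :
    green p x w = (∑' n, fh G p a n x) * green p a w := by
  have hf := summable_fh hconn hacyc hp_nonneg hp_zero hp_sum hε hη hηhalf hH a x
  have hg := summable_pn hconn hacyc hp_nonneg hp_zero hp_sum hε hη hηhalf hH a w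
  have hfn : Summable (fun n => ‖fh G p a n x‖) := by
    refine hf.congr fun n => ?_
    rw [Real.norm_of_nonneg (fh_nonneg hp_nonneg a n x)]
  have hgn : Summable (fun n => ‖pn p n a w‖) := by
    refine hg.congr fun n => ?_
    rw [Real.norm_of_nonneg (pn_nonneg hp_nonneg n a w)]
  have hcp := tsum_mul_tsum_eq_tsum_sum_range_of_summable_norm hfn hgn
  rw [green, tsum_congr (fun n => conv_fh hconn hacyc hp_nonneg hp_zero n x hsep)]
  rw [← hcp]
  rfl

include hconn hacyc in
lemma proj_dist (γ : ℕ → S) (hgd : ∀ m n : ℕ, m ≤ n → G.dist (γ m) (γ n) = n - m)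
    (kx : ℕ) (x : S) (hmin : ∀ n, G.dist x (γ kx) ≤ G.dist x (γ n)) :
    ∀ m : ℕ, G.dist x (γ (kx + m)) = G.dist x (γ kx) + m := by
  have hadj : ∀ n : ℕ, G.Adj (γ n) (γ (n+1)) := by
    intro n
    have h := hgd n (n+1) (by omega)
    exact SimpleGraph.dist_eq_one_iff_adj.mp (by omega)
  have hne : ∀ n : ℕ, γ n ≠ γ (n+2) := by
    intro n hne
    have h := hgd n (n+2) (by omega)
    rw [← hne, SimpleGraph.dist_self] at h
    omega
  have hstep : ∀ n : ℕ, G.dist x (γ (n+1)) = G.dist x (γ n) + 1 ∨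
      G.dist x (γ n) = G.dist x (γ (n+1)) + 1 := by
    intro n
    have h := step_dist hconn hacyc (w := x) (hadj n).symm
    rw [SimpleGraph.dist_comm (u := γ n), SimpleGraph.dist_comm (u := γ (n+1))] at h
    omega
  have hmax : ∀ n : ℕ, G.dist x (γ n) + 1 = G.dist x (γ (n+1)) →
      G.dist x (γ (n+2)) + 1 = G.dist x (γ (n+1)) → False := by
    intro n h1 h2
    have d1 : G.dist (γ n) x + 1 = G.dist (γ (n+1)) x := by
      rw [SimpleGraph.dist_comm (u := γ n), SimpleGraph.dist_comm (u := γ (n+1))]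
      omega
    have d2 : G.dist (γ (n+2)) x + 1 = G.dist (γ (n+1)) x := by
      rw [SimpleGraph.dist_comm (u := γ (n+2)), SimpleGraph.dist_comm (u := γ (n+1))]
      omega
    exact hne n (step_unique hconn hacyc (hadj n).symm (hadj (n+1)) d1 d2)
  have key : ∀ m : ℕ, G.dist x (γ (kx + m)) = G.dist x (γ kx) + m ∧
      G.dist x (γ (kx + m + 1)) = G.dist x (γ kx) + (m + 1) := by
    intro m
    induction m with
    | zero =>
      refine ⟨by simp, ?_⟩
      rcases hstep kx with h | h
      · simpa using h
      · have := hmin (kx + 1)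
        omega
    | succ m ih =>
      obtain ⟨ih1, ih2⟩ := ih
      have e1 : kx + (m + 1) = kx + m + 1 := by omega
      rw [e1]
      refine ⟨ih2, ?_⟩
      rcases hstep (kx + m + 1) with h | h
      · omega
      · exfalso
        refine hmax (kx + m) (by omega) ?_
        have e3 : kx + m + 2 = kx + m + 1 + 1 := by omega
        rw [e3]
        omega
  exact fun m => (key m).1

end FH

end MKaux

/-- Under hypothesis (H), the Martin kernel
`K(x) = G(x,π(x))/G(o,π(x))` along a geodesic ray `γ` from `o` (with
projection `π(x) = γ (k x)`) is a positive harmonic function with `K(o) = 1`. -/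
theorem martin_kernel_positive_harmonic
    {S : Type*} [Countable S] (G : SimpleGraph S)
    [∀ x : S, Fintype (G.neighborSet x)]
    (hconn : G.Connected) (hacyc : G.IsAcyclic)
    (p : S → S → ℝ)
    (hp_pos : ∀ x y, 0 < p x y ↔ G.Adj x y)
    (hp_zero : ∀ x y, ¬ G.Adj x y → p x y = 0)
    (hp_sum : ∀ x, ∑ y ∈ G.neighborFinset x, p x y = 1)
    (ε η : ℝ) (hε : 0 < ε) (hη : 0 < η)
    (hH : ∀ x y, G.Adj x y → ε ≤ p x y ∧ p x y ≤ 1 / 2 - η)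
    (o : S) (γ : ℕ → S) (hγ0 : γ 0 = o)
    (hγ : ∀ m n : ℕ, (G.dist (γ m) (γ n) : ℤ) = |(m : ℤ) - (n : ℤ)|)
    (k : S → ℕ)
    (hk_min : ∀ (x : S) (n : ℕ), G.dist x (γ (k x)) ≤ G.dist x (γ n))
    (hk_uniq : ∀ (x : S) (n : ℕ), G.dist x (γ n) ≤ G.dist x (γ (k x)) → n = k x)
    (K : S → ℝ) (hK : ∀ x, K x = green p x (γ (k x)) / green p o (γ (k x))) :
    K o = 1 ∧ ∀ x : S, 0 < K x ∧ ∑' y, p x y * K y = K x := by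
  classical
  have hp_nonneg : ∀ x y, 0 ≤ p x y := by
    intro x y
    by_cases h : G.Adj x y
    · exact le_of_lt ((hp_pos x y).mpr h)
    · rw [hp_zero x y h]
  obtain ⟨y0, hy0⟩ : ∃ y0, y0 ∈ G.neighborFinset o := by
    by_contra hc
    push_neg at hc
    have he : (G.neighborFinset o) = ∅ := Finset.eq_empty_of_forall_notMem hc
    have hs := hp_sum o
    rw [he, Finset.sum_empty] at hs
    norm_num at hs
  have hadj0 : G.Adj o y0 := by simpa using hy0
  have hηhalf : η < 1/2 := by
    have h1 := (hH o y0 hadj0).1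
    have h2 := (hH o y0 hadj0).2
    linarith
  have hgd : ∀ m n : ℕ, m ≤ n → G.dist (γ m) (γ n) = n - m := by
    intro m n hmn
    have h := hγ m n
    rw [abs_sub_comm] at h
    rw [abs_of_nonneg (by push_cast; omega : (0:ℤ) ≤ (n:ℤ) - (m:ℤ))] at h
    omega
  have GP : ∀ x y : S, 0 < green p x y := fun x y =>
    MKaux.green_pos hconn hacyc hp_nonneg hp_zero hp_sum hε hη hηhalf hH x y
  have GF : ∀ {a w x : S}, G.dist x a + G.dist a w = G.dist x w →
      green p x w = (∑' n, MKaux.fh G p a n x) * green p a w := fun h =>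
    MKaux.green_factor hconn hacyc hp_nonneg hp_zero hp_sum hε hη hηhalf hH h
  constructor
  · rw [hK o]
    exact div_self (GP o (γ (k o))).ne'
  · intro x
    refine ⟨by rw [hK x]; exact div_pos (GP _ _) (GP _ _), ?_⟩
    set N : ℕ := max (k x + 1) ((G.neighborFinset x).sup k) with hN
    have hNx : k x + 1 ≤ N := le_max_left _ _
    have hprojx : ∀ (y : S) (n : ℕ), k y ≤ n →
        G.dist y (γ n) = G.dist y (γ (k y)) + (n - k y) := by
      intro y n hyn
      have h := MKaux.proj_dist hconn hacyc γ hgd (k y) y (fun n => hk_min y n) (n - k y)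
      rwa [show k y + (n - k y) = n by omega] at h
    have claim : ∀ y : S, k y ≤ N → K y = green p y (γ N) / green p o (γ N) := by
      intro y hyN
      have sep1 : G.dist y (γ (k y)) + G.dist (γ (k y)) (γ N) = G.dist y (γ N) := by
        rw [hgd (k y) N hyN, hprojx y N hyN]
      have sep2 : G.dist o (γ (k y)) + G.dist (γ (k y)) (γ N) = G.dist o (γ N) := by
        rw [← hγ0, hgd 0 (k y) (by omega), hgd (k y) N hyN, hgd 0 N (by omega)]
        omega
      have sep3 : G.dist y (γ (k y)) + G.dist (γ (k y)) (γ (k y)) = G.dist y (γ (k y)) := by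
        simp [SimpleGraph.dist_self]
      have sep4 : G.dist o (γ (k y)) + G.dist (γ (k y)) (γ (k y)) = G.dist o (γ (k y)) := by
        simp [SimpleGraph.dist_self]
      rw [hK y, GF sep1, GF sep2, GF sep3, GF sep4,
        mul_div_mul_right _ _ (GP (γ (k y)) (γ (k y))).ne',
        mul_div_mul_right _ _ (GP (γ (k y)) (γ N)).ne']
    have hxN : x ≠ γ N := by
      intro h
      have h2 := hprojx x N (by omega : k x ≤ N)
      rw [← h, SimpleGraph.dist_self] at h2
      omega
    have hts : ∑' y, p x y * K y = ∑ z ∈ G.neighborFinset x, p x z * K z := by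
      refine tsum_eq_sum ?_
      intro b hb
      rw [hp_zero x b (by simpa using hb), zero_mul]
    rw [hts]
    have hterm : ∀ z ∈ G.neighborFinset x, p x z * K z
        = p x z * green p z (γ N) / green p o (γ N) := by
      intro z hz
      rw [claim z (le_trans (Finset.le_sup hz) (le_max_right _ _)), mul_div_assoc]
    rw [Finset.sum_congr rfl hterm, ← Finset.sum_div,
      ← MKaux.green_step hconn hacyc hp_nonneg hp_zero hp_sum hε hη hηhalf hH hxN,
      ← claim x (by omega : k x ≤ N)]

end
end

section
/- (Ancona's lemma for trees.) Under hypothesis (H), for every c ∈ ℕ there exists α > 0, depending only on ε and c (one may take α = 3 ε^{2c+2}), such that for every geodesic ray γ from o and every y ∈ S with d(y, π(y)) ≤ c one has G(o,y) · K(y) ≥ α, where K(y) = G(y,π(y))/G(o,π(y)) is the Martin kernel along γ. -/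
open scoped Classical

noncomputable section

namespace AnconaProof

open SimpleGraph

variable {S : Type*} {G : SimpleGraph S}

lemma exists_path_length_eq_dist (hconn : G.Connected) (x y : S) :
    ∃ q : G.Walk x y, q.IsPath ∧ q.length = G.dist x y := by
  obtain ⟨w, hw⟩ := hconn.exists_walk_length_eq_dist x y
  exact ⟨w.bypass, w.bypass_isPath,
    le_antisymm (hw ▸ w.length_bypass_le) (SimpleGraph.dist_le _)⟩

lemma tree_step (hconn : G.Connected) (hacyc : G.IsAcyclic) {x y : S} (hxy : x ≠ y) :
    ∃ w, G.Adj x w ∧ G.dist w y + 1 = G.dist x y ∧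
      ∀ w', G.Adj x w' → w' ≠ w → G.dist w' y = G.dist x y + 1 := by
  obtain ⟨P, hPp, hPl⟩ := exists_path_length_eq_dist hconn x y
  cases P with
  | nil => exact absurd rfl hxy
  | @cons _ w _ h q =>
    have hql : q.length + 1 = G.dist x y := by
      simpa [SimpleGraph.Walk.length_cons] using hPl
    have hxw1 : G.dist x w = 1 := dist_eq_one_iff_adj.mpr h
    have hwy : G.dist w y = q.length := by
      have h1 : G.dist w y ≤ q.length := SimpleGraph.dist_le q
      have h2 : G.dist x y ≤ G.dist x w + G.dist w y := hconn.dist_triangle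
      omega
    refine ⟨w, h, by omega, ?_⟩
    intro w' hadj' hne
    have hxw'1 : G.dist x w' = 1 := dist_eq_one_iff_adj.mpr hadj'
    have hw'x1 : G.dist w' x = 1 := by rw [SimpleGraph.dist_comm]; exact hxw'1
    have hb1 : G.dist x y ≤ G.dist x w' + G.dist w' y := hconn.dist_triangle
    have hb2 : G.dist w' y ≤ G.dist w' x + G.dist x y := hconn.dist_triangle
    have hne1 : G.dist w' y + 1 ≠ G.dist x y := by
      intro hEq
      obtain ⟨Q, hQp, hQl⟩ := exists_path_length_eq_dist hconn w' y
      have hxQ : x ∉ Q.support := by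
        intro hx
        have h3 := SimpleGraph.dist_le (Q.dropUntil x hx)
        have h4 := Q.length_dropUntil_le hx
        omega
      have hP' : (SimpleGraph.Walk.cons hadj' Q).IsPath := hQp.cons hxQ
      have heq := hacyc.path_unique ⟨SimpleGraph.Walk.cons hadj' Q, hP'⟩
        ⟨SimpleGraph.Walk.cons h q, hPp⟩
      have hwalk : SimpleGraph.Walk.cons hadj' Q = SimpleGraph.Walk.cons h q :=
        congrArg Subtype.val heq
      have hv := congrArg (fun W : G.Walk x y => W.getVert 1) hwalk
      simp only [SimpleGraph.Walk.getVert_cons_succ, SimpleGraph.Walk.getVert_zero] at hv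
      exact hne hv
    have hne2 : G.dist w' y ≠ G.dist x y := by
      intro hEq
      obtain ⟨Q, hQp, hQl⟩ := exists_path_length_eq_dist hconn w' y
      have hxQ : x ∉ Q.support := by
        intro hx
        have hspec := Q.take_spec hx
        have hlen := congrArg SimpleGraph.Walk.length hspec
        rw [SimpleGraph.Walk.length_append] at hlen
        have h3 : G.dist w' x ≤ (Q.takeUntil x hx).length := SimpleGraph.dist_le _
        have h4 : G.dist x y ≤ (Q.dropUntil x hx).length := SimpleGraph.dist_le _
        omega
      have hP' : (SimpleGraph.Walk.cons hadj' Q).IsPath := hQp.cons hxQ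
      have heq := hacyc.path_unique ⟨SimpleGraph.Walk.cons hadj' Q, hP'⟩
        ⟨SimpleGraph.Walk.cons h q, hPp⟩
      have hlen := congrArg (fun P : G.Path x y => (P : G.Walk x y).length) heq
      simp only [SimpleGraph.Walk.length_cons] at hlen
      omega
    omega

lemma p_nonneg (p : S → S → ℝ) (hp_pos : ∀ x y, 0 < p x y ↔ G.Adj x y)
    (hp_zero : ∀ x y, ¬ G.Adj x y → p x y = 0) : ∀ x y, 0 ≤ p x y := by
  intro x y
  by_cases h : G.Adj x y
  · exact ((hp_pos x y).mpr h).le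
  · exact (hp_zero x y h).ge

lemma pn_nonneg (p : S → S → ℝ) (hp : ∀ x y, 0 ≤ p x y) :
    ∀ n (x y : S), 0 ≤ pn p n x y := by
  intro n
  induction n with
  | zero => intro x y; simp only [pn]; split <;> norm_num
  | succ n ih => intro x y; exact tsum_nonneg fun z => mul_nonneg (hp x z) (ih z y)

variable [∀ x : S, Fintype (G.neighborSet x)]

lemma pn_succ_eq (p : S → S → ℝ) (hp_zero : ∀ x y, ¬ G.Adj x y → p x y = 0)
    (n : ℕ) (x y : S) :
    pn p (n+1) x y = ∑ z ∈ G.neighborFinset x, p x z * pn p n z y := by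
  simp only [pn]
  refine tsum_eq_sum fun b hb => ?_
  rw [hp_zero x b fun hadj => hb ((SimpleGraph.mem_neighborFinset G x b).mpr hadj), zero_mul]

lemma pn_chapman (p : S → S → ℝ) (hp_zero : ∀ x y, ¬ G.Adj x y → p x y = 0)
    (hp : ∀ x y, 0 ≤ p x y) :
    ∀ (m n : ℕ) (x z y : S), pn p m x z * pn p n z y ≤ pn p (m + n) x y := by
  intro m
  induction m with
  | zero =>
    intro n x z y
    rcases eq_or_ne x z with rfl | hxz
    · simp [pn]
    · simpa [pn, hxz] using pn_nonneg p hp (0 + n) x y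
  | succ m ih =>
    intro n x z y
    rw [pn_succ_eq p hp_zero, show m + 1 + n = (m + n) + 1 by omega,
      pn_succ_eq p hp_zero, Finset.sum_mul]
    refine Finset.sum_le_sum fun w _ => ?_
    rw [mul_assoc]
    exact mul_le_mul_of_nonneg_left (ih n w z y) (hp x w)

lemma pn_geodesic_ge (hconn : G.Connected) (p : S → S → ℝ)
    (hp_zero : ∀ x y, ¬ G.Adj x y → p x y = 0) (hp : ∀ x y, 0 ≤ p x y)
    (ε : ℝ) (hε0 : 0 ≤ ε) (hεle : ∀ x y, G.Adj x y → ε ≤ p x y) :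
    ∀ (n : ℕ) (x y : S), G.dist x y = n → ε ^ n ≤ pn p n x y := by
  intro n
  induction n with
  | zero =>
    intro x y hd
    have : x = y := (hconn.dist_eq_zero_iff).mp hd
    subst this
    simp [pn]
  | succ n ih =>
    intro x y hd
    have hxy : x ≠ y := by
      intro h; subst h; rw [SimpleGraph.dist_self] at hd; omega
    obtain ⟨P, hPp, hPl⟩ := exists_path_length_eq_dist hconn x y
    cases P with
    | nil => exact absurd rfl hxy
    | @cons _ w _ h q =>
      have hql : q.length = n := by
        simp only [SimpleGraph.Walk.length_cons] at hPl; omega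
      have hxw1 : G.dist x w = 1 := dist_eq_one_iff_adj.mpr h
      have hwy : G.dist w y = n := by
        have h1 : G.dist w y ≤ q.length := SimpleGraph.dist_le q
        have h2 : G.dist x y ≤ G.dist x w + G.dist w y := hconn.dist_triangle
        omega
      rw [pn_succ_eq p hp_zero]
      have hwmem : w ∈ G.neighborFinset x := (SimpleGraph.mem_neighborFinset G x w).mpr h
      calc ε ^ (n + 1) = ε * ε ^ n := by ring
        _ ≤ p x w * pn p n w y :=
            mul_le_mul (hεle x w h) (ih w y hwy) (pow_nonneg hε0 n) (hp x w)
        _ ≤ ∑ z ∈ G.neighborFinset x, p x z * pn p n z y :=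
            Finset.single_le_sum (fun z _ => mul_nonneg (hp x z) (pn_nonneg p hp n z y)) hwmem

lemma sum_step_le (hconn : G.Connected) (hacyc : G.IsAcyclic) (p : S → S → ℝ)
    (hp_zero : ∀ x y, ¬ G.Adj x y → p x y = 0) (hp : ∀ x y, 0 ≤ p x y)
    (hp_sum : ∀ x, ∑ y ∈ G.neighborFinset x, p x y = 1)
    (η : ℝ) (hη0 : 0 < η) (hη2 : η < 1/2)
    (hple : ∀ x y, G.Adj x y → p x y ≤ 1/2 - η) (y x : S) :
    ∑ w ∈ G.neighborFinset x, p x w * (1 - 2*η) ^ (G.dist w y)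
      ≤ (1 - 2*η^2) * (1 - 2*η) ^ (G.dist x y) := by
  have hβ0 : (0:ℝ) < 1 - 2*η := by linarith
  rcases eq_or_ne x y with rfl | hxy
  · have hcongr : ∀ w ∈ G.neighborFinset x,
        p x w * (1 - 2*η) ^ (G.dist w x) = p x w * (1 - 2*η) := by
      intro w hw
      have hadj : G.Adj x w := (SimpleGraph.mem_neighborFinset G x w).mp hw
      have : G.dist w x = 1 := dist_eq_one_iff_adj.mpr hadj.symm
      rw [this, pow_one]
    rw [Finset.sum_congr rfl hcongr, ← Finset.sum_mul, hp_sum x, one_mul,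
      SimpleGraph.dist_self, pow_zero, mul_one]
    nlinarith
  · obtain ⟨w₀, hadj₀, hd₀, hother⟩ := tree_step hconn hacyc hxy
    have hw₀mem : w₀ ∈ G.neighborFinset x := (SimpleGraph.mem_neighborFinset G x w₀).mpr hadj₀
    rw [← Finset.add_sum_erase _ _ hw₀mem]
    have hcongr : ∀ w ∈ (G.neighborFinset x).erase w₀,
        p x w * (1 - 2*η) ^ (G.dist w y) = p x w * (1 - 2*η) ^ (G.dist w₀ y + 2) := by
      intro w hw
      obtain ⟨hne, hmem⟩ := Finset.mem_erase.mp hw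
      rw [hother w ((SimpleGraph.mem_neighborFinset G x w).mp hmem) hne,
        show G.dist x y + 1 = G.dist w₀ y + 2 by omega]
    rw [Finset.sum_congr rfl hcongr, ← Finset.sum_mul]
    have hsum_erase : ∑ w ∈ (G.neighborFinset x).erase w₀, p x w = 1 - p x w₀ := by
      have h5 := Finset.add_sum_erase _ (p x) hw₀mem
      rw [hp_sum x] at h5
      linarith
    rw [hsum_erase, ← hd₀]
    have hq1 : p x w₀ ≤ 1/2 - η := hple x w₀ hadj₀
    have hq0 : 0 ≤ p x w₀ := hp x w₀
    have hpow : (0:ℝ) ≤ (1 - 2*η) ^ (G.dist w₀ y) := by positivity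
    have e1 : (1 - 2*η) ^ (G.dist w₀ y + 1) = (1 - 2*η) ^ (G.dist w₀ y) * (1 - 2*η) :=
      pow_succ _ _
    have e2 : (1 - 2*η) ^ (G.dist w₀ y + 2)
        = (1 - 2*η) ^ (G.dist w₀ y) * (1 - 2*η) * (1 - 2*η) := by
      rw [show G.dist w₀ y + 2 = (G.dist w₀ y + 1) + 1 from rfl, pow_succ, e1]
    rw [e1, e2]
    have h45 : 0 ≤ 4*η*(1-η) * (1/2 - η - p x w₀) :=
      mul_nonneg (by nlinarith) (by linarith)
    nlinarith [mul_nonneg hpow h45]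

lemma pn_upper (hconn : G.Connected) (hacyc : G.IsAcyclic) (p : S → S → ℝ)
    (hp_zero : ∀ x y, ¬ G.Adj x y → p x y = 0) (hp : ∀ x y, 0 ≤ p x y)
    (hp_sum : ∀ x, ∑ y ∈ G.neighborFinset x, p x y = 1)
    (η : ℝ) (hη0 : 0 < η) (hη2 : η < 1/2)
    (hple : ∀ x y, G.Adj x y → p x y ≤ 1/2 - η) (y : S) :
    ∀ (n : ℕ) (x : S), pn p n x y ≤ (1 - 2*η^2) ^ n * (1 - 2*η) ^ (G.dist x y) := by
  have hθ0 : (0:ℝ) ≤ 1 - 2*η^2 := by nlinarith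
  intro n
  induction n with
  | zero =>
    intro x
    rcases eq_or_ne x y with rfl | hne
    · simp [pn, SimpleGraph.dist_self]
    · simp only [pn, if_neg hne, pow_zero, one_mul]
      exact pow_nonneg (by linarith) _
  | succ n ih =>
    intro x
    rw [pn_succ_eq p hp_zero]
    calc ∑ w ∈ G.neighborFinset x, p x w * pn p n w y
        ≤ ∑ w ∈ G.neighborFinset x,
            p x w * ((1 - 2*η^2) ^ n * (1 - 2*η) ^ (G.dist w y)) :=
          Finset.sum_le_sum fun w _ => mul_le_mul_of_nonneg_left (ih w) (hp x w)
      _ = (1 - 2*η^2) ^ n * ∑ w ∈ G.neighborFinset x, p x w * (1 - 2*η) ^ (G.dist w y) := by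
          rw [Finset.mul_sum]; exact Finset.sum_congr rfl fun w _ => by ring
      _ ≤ (1 - 2*η^2) ^ n * ((1 - 2*η^2) * (1 - 2*η) ^ (G.dist x y)) :=
          mul_le_mul_of_nonneg_left
            (sum_step_le hconn hacyc p hp_zero hp hp_sum η hη0 hη2 hple y x)
            (pow_nonneg hθ0 n)
      _ = (1 - 2*η^2) ^ (n+1) * (1 - 2*η) ^ (G.dist x y) := by ring

lemma green_summable (hconn : G.Connected) (hacyc : G.IsAcyclic) (p : S → S → ℝ)
    (hp_zero : ∀ x y, ¬ G.Adj x y → p x y = 0) (hp : ∀ x y, 0 ≤ p x y)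
    (hp_sum : ∀ x, ∑ y ∈ G.neighborFinset x, p x y = 1)
    (η : ℝ) (hη0 : 0 < η) (hη2 : η < 1/2)
    (hple : ∀ x y, G.Adj x y → p x y ≤ 1/2 - η) (x y : S) :
    Summable fun n => pn p n x y := by
  have hθ0 : (0:ℝ) ≤ 1 - 2*η^2 := by nlinarith
  have hθ1 : (1:ℝ) - 2*η^2 < 1 := by nlinarith
  refine Summable.of_nonneg_of_le (fun n => pn_nonneg p hp n x y) (fun n => ?_)
    (summable_geometric_of_lt_one hθ0 hθ1)
  refine (pn_upper hconn hacyc p hp_zero hp hp_sum η hη0 hη2 hple y n x).trans ?_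
  have hb0 : (0:ℝ) ≤ 1 - 2*η := by linarith
  have : (1 - 2*η) ^ (G.dist x y) ≤ 1 := pow_le_one₀ hb0 (by linarith)
  nlinarith [pow_nonneg hθ0 n]

end AnconaProof

set_option maxHeartbeats 1000000 in
open AnconaProof in
/-- **Ancona's lemma for trees.** Under hypothesis (H), for
every `c ∈ ℕ` the constant `α = 3 ε^(2c+2) > 0` (depending only on `ε` and
`c`) satisfies: for every geodesic ray `γ` from `o` (with projection
`π(y) = γ (k y)`) and every `y` with `d(y, π(y)) ≤ c`,
`G(o,y) ⬝ K(y) ≥ α`, where `K(y) = G(y,π(y))/G(o,π(y))`. -/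
theorem ancona_lemma
    {S : Type*} [Countable S] (G : SimpleGraph S)
    [∀ x : S, Fintype (G.neighborSet x)]
    (hconn : G.Connected) (hacyc : G.IsAcyclic)
    (p : S → S → ℝ)
    (hp_pos : ∀ x y, 0 < p x y ↔ G.Adj x y)
    (hp_zero : ∀ x y, ¬ G.Adj x y → p x y = 0)
    (hp_sum : ∀ x, ∑ y ∈ G.neighborFinset x, p x y = 1)
    (ε η : ℝ) (hε : 0 < ε) (hη : 0 < η)
    (hH : ∀ x y, G.Adj x y → ε ≤ p x y ∧ p x y ≤ 1 / 2 - η)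
    (c : ℕ) :
    ∃ α : ℝ, 0 < α ∧ α = 3 * ε ^ (2 * c + 2) ∧
      ∀ (o : S) (γ : ℕ → S), γ 0 = o →
        (∀ m n : ℕ, (G.dist (γ m) (γ n) : ℤ) = |(m : ℤ) - (n : ℤ)|) →
        ∀ k : S → ℕ,
          (∀ (x : S) (n : ℕ), G.dist x (γ (k x)) ≤ G.dist x (γ n)) →
          (∀ (x : S) (n : ℕ), G.dist x (γ n) ≤ G.dist x (γ (k x)) → n = k x) →
          ∀ y : S, G.dist y (γ (k y)) ≤ c →
            α ≤ green p o y * (green p y (γ (k y)) / green p o (γ (k y))) := by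
  refine ⟨3 * ε ^ (2 * c + 2), by positivity, rfl, ?_⟩
  intro o γ hγ0 hgeo k hk1 hk2 y hyc
  set π := γ (k y) with hπ
  have hp' : ∀ x y, 0 ≤ p x y := p_nonneg p hp_pos hp_zero
  -- there is at least one edge, hence `ε ≤ 1/2 - η` and `η < 1/2`
  have hone : (G.neighborFinset o).Nonempty := by
    by_contra h
    rw [Finset.not_nonempty_iff_eq_empty] at h
    have := hp_sum o
    rw [h, Finset.sum_empty] at this
    norm_num at this
  obtain ⟨z₀, hz₀⟩ := hone
  have hadj₀ : G.Adj o z₀ := (SimpleGraph.mem_neighborFinset G o z₀).mp hz₀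
  have hεa : ε ≤ 1/2 - η := le_trans (hH o z₀ hadj₀).1 (by simpa using (hH o z₀ hadj₀).2)
  have hη2 : η < 1/2 := by linarith
  have hε1 : ε < 1 := by linarith
  have hple : ∀ x y, G.Adj x y → p x y ≤ 1/2 - η := by
    intro a b hab
    simpa using (hH a b hab).2
  have hεle : ∀ x y, G.Adj x y → ε ≤ p x y := fun a b hab => (hH a b hab).1
  have hsum : ∀ a b : S, Summable fun n => pn p n a b := fun a b =>
    green_summable hconn hacyc p hp_zero hp' hp_sum η hη hη2 hple a b
  set d := G.dist y π with hd
  have hdc : d ≤ c := hyc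
  have hπy : G.dist π y = d := by rw [SimpleGraph.dist_comm]
  have hgreen_nonneg : ∀ a b : S, 0 ≤ green p a b := fun a b =>
    tsum_nonneg fun n => pn_nonneg p hp' n a b
  have hlow : ∀ (a b : S), ε ^ (G.dist a b) ≤ green p a b := by
    intro a b
    refine le_trans
      (pn_geodesic_ge hconn p hp_zero hp' ε hε.le hεle (G.dist a b) a b rfl) ?_
    exact Summable.le_tsum (hsum a b) (G.dist a b) fun j _ => pn_nonneg p hp' j a b
  have hBy : ε ^ d ≤ green p y π := by rw [hd]; exact hlow y π
  have hCpos : 0 < green p o π :=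
    lt_of_lt_of_le (pow_pos hε (G.dist o π)) (hlow o π)
  have hA : green p o π * ε ^ d ≤ green p o y := by
    calc green p o π * ε ^ d
        ≤ green p o π * pn p d π y :=
          mul_le_mul_of_nonneg_left
            (pn_geodesic_ge hconn p hp_zero hp' ε hε.le hεle d π y hπy)
            (hgreen_nonneg o π)
      _ = ∑' m, pn p m o π * pn p d π y := tsum_mul_right.symm
      _ ≤ ∑' m, pn p (m + d) o y :=
          Summable.tsum_le_tsum (fun m => pn_chapman p hp_zero hp' m d o π y)
            ((hsum o π).mul_right _) ((summable_nat_add_iff d).mpr (hsum o y))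
      _ ≤ green p o y := by
          rw [green, ← Summable.sum_add_tsum_nat_add d (hsum o y)]
          exact le_add_of_nonneg_left
            (Finset.sum_nonneg fun i _ => pn_nonneg p hp' i o y)
  have key : ε ^ d * ε ^ d ≤ green p o y * (green p y π / green p o π) := by
    have e : ε ^ d * ε ^ d = (green p o π * ε ^ d) * (ε ^ d / green p o π) := by
      field_simp
    rw [e]
    refine mul_le_mul hA ?_ (by positivity) (hgreen_nonneg o y)
    gcongr
  calc 3 * ε ^ (2 * c + 2) ≤ ε ^ (2 * c) := by
        have hE : (0:ℝ) ≤ ε ^ (2 * c) := pow_nonneg hε.le _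
        have h3 : 3 * ε ^ 2 ≤ 1 := by nlinarith
        calc 3 * ε ^ (2 * c + 2) = (3 * ε ^ 2) * ε ^ (2 * c) := by ring
          _ ≤ 1 * ε ^ (2 * c) := mul_le_mul_of_nonneg_right h3 hE
          _ = ε ^ (2 * c) := one_mul _
    _ ≤ ε ^ (2 * d) := pow_le_pow_of_le_one hε.le hε1.le (by omega)
    _ = ε ^ d * ε ^ d := by rw [← pow_add]; ring_nf
    _ ≤ green p o y * (green p y π / green p o π) := key

end
end
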